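/- arXiv:1802.00488 — 6 statements merged into one kernel-verified Lean document; each statement's English description precedes it below -/
import Mathlib

section
/- Let R be a ℤ₊-ring with basis {b_γ : γ ∈ Γ}. A proper Serre ideal P of R is a Serre prime ideal (i.e., for all Serre ideals I, J of R, IJ ⊆ P implies I ⊆ P or J ⊆ P) if and only if for all α, β ∈ Γ, b_α R b_β ⊆ P implies b_α ∈ P or b_β ∈ P. -/
variable {Γ R : Type*}

/-- The positive cone `R₊` of a `ℤ₊`-ring with basis `b`. -/
def ZPos [NonUnitalRing R] (b : Module.Basis Γ ℤ R) : Set R :=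
  {r | ∀ γ : Γ, 0 ≤ b.repr r γ}

/-- The structure constants of the multiplication with respect to `b` are nonnegative,
i.e. `(R, b)` is a `ℤ₊`-ring. -/
def PosBasis [NonUnitalRing R] (b : Module.Basis Γ ℤ R) : Prop :=
  ∀ α β γ : Γ, 0 ≤ b.repr (b α * b β) γ

/-- A Serre ideal: a two-sided ideal of the form `⨁_{γ ∈ Γ'} ℤ b_γ`. -/
def IsSerreIdeal [NonUnitalRing R] (b : Module.Basis Γ ℤ R) (I : Set R) : Prop :=
  (∃ Γ' : Set Γ, I = ↑(Submodule.span ℤ (⇑b '' Γ'))) ∧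
  (∀ r ∈ I, ∀ s : R, s * r ∈ I) ∧
  (∀ r ∈ I, ∀ s : R, r * s ∈ I)

/-- A Serre prime ideal: a proper Serre ideal `P` such that for all Serre ideals
`I, J`, `IJ ⊆ P` implies `I ⊆ P` or `J ⊆ P`. -/
def IsSerrePrime [NonUnitalRing R] (b : Module.Basis Γ ℤ R) (P : Set R) : Prop :=
  IsSerreIdeal b P ∧ P ≠ Set.univ ∧
    ∀ I J : Set R, IsSerreIdeal b I → IsSerreIdeal b J →
      (∀ x ∈ I, ∀ y ∈ J, x * y ∈ P) → I ⊆ P ∨ J ⊆ P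

section Aux

variable [NonUnitalRing R] (b : Module.Basis Γ ℤ R)

lemma repr_mul_apply' (x y : R) (ε : Γ) :
    b.repr (x * y) ε =
      (b.repr x).sum fun μ m => (b.repr y).sum fun ν n => m * n * b.repr (b μ * b ν) ε := by
  conv_lhs => rw [show x * y = LinearMap.mul ℤ R x y from rfl,
    ← LinearMap.sum_repr_mul_repr_mul b b x y]
  rw [map_finsuppSum, Finsupp.sum_apply]
  refine Finsupp.sum_congr fun μ _ => ?_
  rw [map_finsuppSum, Finsupp.sum_apply]
  refine Finsupp.sum_congr fun ν _ => ?_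
  simp [LinearMap.mul_apply', mul_assoc]

lemma repr_mul_apply (x y : R) (ε : Γ) :
    b.repr (x * y) ε = ∑ μ ∈ (b.repr x).support, ∑ ν ∈ (b.repr y).support,
      b.repr x μ * b.repr y ν * b.repr (b μ * b ν) ε := by
  rw [repr_mul_apply' b x y ε]
  rfl

lemma mem_span_iff (S : Set Γ) (x : R) :
    x ∈ Submodule.span ℤ (⇑b '' S) ↔ ∀ γ : Γ, b.repr x γ ≠ 0 → γ ∈ S := by
  rw [Module.Basis.mem_span_image]
  constructor
  · intro h γ hγ
    exact h (Finsupp.mem_support_iff.mpr hγ)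
  · intro h γ hγ
    exact h γ (Finsupp.mem_support_iff.mp hγ)

lemma basis_mem_zpos (γ : Γ) : b γ ∈ ZPos b := by
  intro δ
  classical
  rw [b.repr_self, Finsupp.single_apply]
  split <;> norm_num

lemma zpos_mul (hpos : PosBasis b) {x y : R} (hx : x ∈ ZPos b) (hy : y ∈ ZPos b) :
    x * y ∈ ZPos b := by
  intro ε
  rw [repr_mul_apply b x y ε]
  refine Finset.sum_nonneg fun μ _ => Finset.sum_nonneg fun ν _ => ?_
  exact mul_nonneg (mul_nonneg (hx μ) (hy ν)) (hpos μ ν ε)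

/-- Positivity: the product of single basis terms appearing in `x` and `y` is dominated
by `x * y` coefficientwise. -/
lemma le_repr_mul (hpos : PosBasis b) {x y : R} (hx : x ∈ ZPos b) (hy : y ∈ ZPos b)
    {μ ν : Γ} (hμ : b.repr x μ ≠ 0) (hν : b.repr y ν ≠ 0) (ε : Γ) :
    b.repr (b μ * b ν) ε ≤ b.repr (x * y) ε := by
  classical
  rw [repr_mul_apply b x y ε]
  have hμ1 : (1 : ℤ) ≤ b.repr x μ := lt_of_le_of_ne (hx μ) (Ne.symm hμ)
  have hν1 : (1 : ℤ) ≤ b.repr y ν := lt_of_le_of_ne (hy ν) (Ne.symm hν)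
  calc b.repr (b μ * b ν) ε
      ≤ b.repr x μ * b.repr y ν * b.repr (b μ * b ν) ε := by
        have h1 : (1 : ℤ) ≤ b.repr x μ * b.repr y ν := by nlinarith
        have h2 := mul_le_mul_of_nonneg_right h1 (hpos μ ν ε)
        linarith
    _ ≤ ∑ ν' ∈ (b.repr y).support, b.repr x μ * b.repr y ν' * b.repr (b μ * b ν') ε :=
        Finset.single_le_sum
          (fun ν' _ => mul_nonneg (mul_nonneg (hx μ) (hy ν')) (hpos μ ν' ε))
          (Finsupp.mem_support_iff.mpr hν)
    _ ≤ ∑ κ ∈ (b.repr x).support, ∑ ν' ∈ (b.repr y).support,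
          b.repr x κ * b.repr y ν' * b.repr (b κ * b ν') ε :=
        Finset.single_le_sum
          (fun κ _ => Finset.sum_nonneg fun ν' _ =>
            mul_nonneg (mul_nonneg (hx κ) (hy ν')) (hpos κ ν' ε))
          (Finsupp.mem_support_iff.mpr hμ)

/-- If a coefficient of `x * y` is nonzero, it comes from a pair of basis elements
appearing in `x` and `y`. -/
lemma exists_of_repr_mul_ne_zero {x y : R} {ε : Γ} (h : b.repr (x * y) ε ≠ 0) :
    ∃ μ ν : Γ, b.repr x μ ≠ 0 ∧ b.repr y ν ≠ 0 ∧ b.repr (b μ * b ν) ε ≠ 0 := by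
  by_contra hc
  push_neg at hc
  apply h
  rw [repr_mul_apply b x y ε]
  refine Finset.sum_eq_zero fun μ hμ => Finset.sum_eq_zero fun ν hν => ?_
  rw [hc μ ν (Finsupp.mem_support_iff.mp hμ) (Finsupp.mem_support_iff.mp hν), mul_zero]

/-- The set of "multiples" of a seed element `v`. -/
def SeedW (v : R) : Set R :=
  {w | w = v ∨ (∃ x ∈ ZPos b, w = x * v) ∨ (∃ y ∈ ZPos b, w = v * y) ∨
    (∃ x ∈ ZPos b, ∃ y ∈ ZPos b, w = x * v * y)}

/-- The index set of the Serre ideal generated by `v`. -/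
def SeedS (v : R) : Set Γ :=
  {ε | ∃ w ∈ SeedW b v, b.repr w ε ≠ 0}

lemma seedW_self (v : R) : v ∈ SeedW b v := Or.inl rfl

lemma seedW_zpos (hpos : PosBasis b) {v : R} (hv : v ∈ ZPos b) {w : R}
    (hw : w ∈ SeedW b v) : w ∈ ZPos b := by
  rcases hw with rfl | ⟨x, hx, rfl⟩ | ⟨y, hy, rfl⟩ | ⟨x, hx, y, hy, rfl⟩
  · exact hv
  · exact zpos_mul b hpos hx hv
  · exact zpos_mul b hpos hv hy
  · exact zpos_mul b hpos (zpos_mul b hpos hx hv) hy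

lemma seedW_mul_left (hpos : PosBasis b) {v z : R} (hz : z ∈ ZPos b) {w : R}
    (hw : w ∈ SeedW b v) : z * w ∈ SeedW b v := by
  rcases hw with rfl | ⟨x, hx, rfl⟩ | ⟨y, hy, rfl⟩ | ⟨x, hx, y, hy, rfl⟩
  · exact Or.inr (Or.inl ⟨z, hz, rfl⟩)
  · exact Or.inr (Or.inl ⟨z * x, zpos_mul b hpos hz hx, (mul_assoc z x v).symm⟩)
  · exact Or.inr (Or.inr (Or.inr ⟨z, hz, y, hy, (mul_assoc z v y).symm⟩))
  · refine Or.inr (Or.inr (Or.inr ⟨z * x, zpos_mul b hpos hz hx, y, hy, ?_⟩))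
    simp only [mul_assoc]

lemma seedW_mul_right (hpos : PosBasis b) {v z : R} (hz : z ∈ ZPos b) {w : R}
    (hw : w ∈ SeedW b v) : w * z ∈ SeedW b v := by
  rcases hw with rfl | ⟨x, hx, rfl⟩ | ⟨y, hy, rfl⟩ | ⟨x, hx, y, hy, rfl⟩
  · exact Or.inr (Or.inr (Or.inl ⟨z, hz, rfl⟩))
  · exact Or.inr (Or.inr (Or.inr ⟨x, hx, z, hz, rfl⟩))
  · exact Or.inr (Or.inr (Or.inl ⟨y * z, zpos_mul b hpos hy hz, mul_assoc v y z⟩))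
  · refine Or.inr (Or.inr (Or.inr ⟨x, hx, y * z, zpos_mul b hpos hy hz, ?_⟩))
    simp only [mul_assoc]

lemma seed_isSerreIdeal (hpos : PosBasis b) {v : R} (hv : v ∈ ZPos b) :
    IsSerreIdeal b ↑(Submodule.span ℤ (⇑b '' SeedS b v)) := by
  refine ⟨⟨SeedS b v, rfl⟩, ?_, ?_⟩
  · intro r hr s
    rw [SetLike.mem_coe, mem_span_iff] at hr ⊢
    intro ε hε
    obtain ⟨μ, ν, hμ, hν, hbb⟩ := exists_of_repr_mul_ne_zero b hε
    obtain ⟨w, hw, hwν⟩ := hr ν hν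
    refine ⟨b μ * w, seedW_mul_left b hpos (basis_mem_zpos b μ) hw, ?_⟩
    have h1 : b.repr (b μ * b ν) ε ≤ b.repr (b μ * w) ε :=
      le_repr_mul b hpos (basis_mem_zpos b μ) (seedW_zpos b hpos hv hw)
        (by rw [b.repr_self]; simp) hwν ε
    have h2 : 0 < b.repr (b μ * b ν) ε := lt_of_le_of_ne (hpos μ ν ε) (Ne.symm hbb)
    omega
  · intro r hr s
    rw [SetLike.mem_coe, mem_span_iff] at hr ⊢
    intro ε hε
    obtain ⟨μ, ν, hμ, hν, hbb⟩ := exists_of_repr_mul_ne_zero b hε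
    obtain ⟨w, hw, hwμ⟩ := hr μ hμ
    refine ⟨w * b ν, seedW_mul_right b hpos (basis_mem_zpos b ν) hw, ?_⟩
    have h1 : b.repr (b μ * b ν) ε ≤ b.repr (w * b ν) ε :=
      le_repr_mul b hpos (seedW_zpos b hpos hv hw) (basis_mem_zpos b ν)
        hwμ (by rw [b.repr_self]; simp) ε
    have h2 : 0 < b.repr (b μ * b ν) ε := lt_of_le_of_ne (hpos μ ν ε) (Ne.symm hbb)
    omega

lemma seed_self_mem (v : R) : v ∈ Submodule.span ℤ (⇑b '' SeedS b v) := by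
  rw [mem_span_iff]
  intro γ hγ
  exact ⟨v, seedW_self b v, hγ⟩

/-- Products of seed-multiples land in `P`, given the two core facts. -/
lemma seedW_prod {P : Set R} (hL : ∀ r ∈ P, ∀ s : R, s * r ∈ P)
    (hR : ∀ r ∈ P, ∀ s : R, r * s ∈ P) {v1 v2 : R}
    (hcore0 : v1 * v2 ∈ P) (hcore : ∀ r : R, v1 * (r * v2) ∈ P) :
    ∀ w1 ∈ SeedW b v1, ∀ w2 ∈ SeedW b v2, w1 * w2 ∈ P := by
  have A : ∀ w2 ∈ SeedW b v2, v1 * w2 ∈ P := by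
    rintro w2 (rfl | ⟨x, hx, rfl⟩ | ⟨y, hy, rfl⟩ | ⟨x, hx, y, hy, rfl⟩)
    · exact hcore0
    · exact hcore x
    · rw [← mul_assoc]; exact hR _ hcore0 y
    · rw [show v1 * (x * v2 * y) = v1 * (x * v2) * y by simp only [mul_assoc]]
      exact hR _ (hcore x) y
  have A' : ∀ r : R, ∀ w2 ∈ SeedW b v2, v1 * r * w2 ∈ P := by
    rintro r w2 (rfl | ⟨x, hx, rfl⟩ | ⟨y, hy, rfl⟩ | ⟨x, hx, y, hy, rfl⟩)
    · rw [mul_assoc]; exact hcore r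
    · rw [show v1 * r * (x * v2) = v1 * (r * x * v2) by simp only [mul_assoc]]
      exact hcore (r * x)
    · rw [show v1 * r * (v2 * y) = v1 * (r * v2) * y by simp only [mul_assoc]]
      exact hR _ (hcore r) y
    · rw [show v1 * r * (x * v2 * y) = v1 * (r * x * v2) * y by simp only [mul_assoc]]
      exact hR _ (hcore (r * x)) y
  rintro w1 (rfl | ⟨x, hx, rfl⟩ | ⟨y, hy, rfl⟩ | ⟨x, hx, y, hy, rfl⟩) w2 hw2
  · exact A w2 hw2
  · rw [mul_assoc]; exact hL _ (A w2 hw2) x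
  · exact A' y w2 hw2
  · rw [show x * v1 * y * w2 = x * (v1 * y * w2) by simp only [mul_assoc]]
    exact hL _ (A' y w2 hw2) x

/-- Key reduction to the basis level: the product of the Serre ideals generated by `v1, v2`
lands in `P`. -/
lemma seed_span_prod (hpos : PosBasis b) {P : Set R} {ΓP : Set Γ}
    (hPeq : P = ↑(Submodule.span ℤ (⇑b '' ΓP)))
    {v1 v2 : R} (hv1 : v1 ∈ ZPos b) (hv2 : v2 ∈ ZPos b)
    (hprod : ∀ w1 ∈ SeedW b v1, ∀ w2 ∈ SeedW b v2, w1 * w2 ∈ P) :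
    ∀ x ∈ (Submodule.span ℤ (⇑b '' SeedS b v1) : Set R),
      ∀ y ∈ (Submodule.span ℤ (⇑b '' SeedS b v2) : Set R), x * y ∈ P := by
  have memP : ∀ z : R, z ∈ P ↔ ∀ ε : Γ, b.repr z ε ≠ 0 → ε ∈ ΓP := by
    intro z; rw [hPeq, SetLike.mem_coe, mem_span_iff]
  -- basis level
  have hbase : ∀ γ ∈ SeedS b v1, ∀ δ ∈ SeedS b v2, b γ * b δ ∈ P := by
    rintro γ ⟨w1, hw1, hγ⟩ δ ⟨w2, hw2, hδ⟩
    rw [memP]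
    intro ε hε
    have h1 : b.repr (b γ * b δ) ε ≤ b.repr (w1 * w2) ε :=
      le_repr_mul b hpos (seedW_zpos b hpos hv1 hw1) (seedW_zpos b hpos hv2 hw2) hγ hδ ε
    have h2 : 0 < b.repr (b γ * b δ) ε := lt_of_le_of_ne (hpos γ δ ε) (Ne.symm hε)
    have h3 : b.repr (w1 * w2) ε ≠ 0 := by omega
    exact (memP (w1 * w2)).mp (hprod w1 hw1 w2 hw2) ε h3
  -- bilinear extension
  have hPsub : P = ↑(Submodule.span ℤ (⇑b '' ΓP)) := hPeq
  intro x hx y hy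
  rw [SetLike.mem_coe] at hx hy
  rw [hPeq, SetLike.mem_coe]
  induction hx using Submodule.span_induction with
  | mem x hxs =>
    obtain ⟨γ, hγ, rfl⟩ := hxs
    induction hy using Submodule.span_induction with
    | mem y hys =>
      obtain ⟨δ, hδ, rfl⟩ := hys
      have := hbase γ hγ δ hδ
      rwa [hPeq, SetLike.mem_coe] at this
    | zero => rw [mul_zero]; exact Submodule.zero_mem _
    | add y z _ _ hy hz => rw [mul_add]; exact Submodule.add_mem _ hy hz
    | smul a y _ hy => rw [mul_smul_comm]; exact Submodule.smul_mem _ a hy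
  | zero => rw [zero_mul]; exact Submodule.zero_mem _
  | add x z _ _ hx1 hz1 => rw [add_mul]; exact Submodule.add_mem _ hx1 hz1
  | smul a x _ hx1 => rw [smul_mul_assoc]; exact Submodule.smul_mem _ a hx1

end Aux

/-- a proper Serre ideal `P` of a `ℤ₊`-ring is Serre prime iff
for all basis elements `b α, b β`, `b_α R b_β ⊆ P` implies `b_α ∈ P` or `b_β ∈ P`. -/
theorem serrePrime_iff_basis_condition
    [NonUnitalRing R] (b : Module.Basis Γ ℤ R) (hpos : PosBasis b)
    (P : Set R) (hP : IsSerreIdeal b P) (hproper : P ≠ Set.univ) :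
    (∀ I J : Set R, IsSerreIdeal b I → IsSerreIdeal b J →
        (∀ x ∈ I, ∀ y ∈ J, x * y ∈ P) → I ⊆ P ∨ J ⊆ P) ↔
      (∀ α β : Γ, (∀ r : R, b α * r * b β ∈ P) → b α ∈ P ∨ b β ∈ P) := by
  obtain ⟨⟨ΓP, hPeq⟩, hL, hR⟩ := hP
  constructor
  · intro hprime α β hαβ
    have hαβ' : ∀ r : R, b α * (r * b β) ∈ P := fun r => by
      rw [← mul_assoc]; exact hαβ r
    set v := b α * b β with hv_def
    have hv : v ∈ ZPos b := fun γ => hpos α β γ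
    have hbα : b α ∈ ZPos b := basis_mem_zpos b α
    have hbβ : b β ∈ ZPos b := basis_mem_zpos b β
    -- Step 1: v ∈ P
    have hcore0 : v * v ∈ P := by
      have := hαβ' (b β * b α)
      rw [show b α * (b β * b α * b β) = v * v by simp only [hv_def, mul_assoc]] at this
      exact this
    have hcore : ∀ r : R, v * (r * v) ∈ P := by
      intro r
      have := hαβ' (b β * r * b α)
      rw [show b α * (b β * r * b α * b β) = v * (r * v) by
        simp only [hv_def, mul_assoc]] at this
      exact this
    have hKpair := seed_span_prod b hpos hPeq hv hv (seedW_prod b hL hR hcore0 hcore)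
    have hK := seed_isSerreIdeal b hpos hv
    have hvP : v ∈ P := by
      rcases hprime _ _ hK hK hKpair with h | h
      · exact h (seed_self_mem b v)
      · exact h (seed_self_mem b v)
    -- Step 2
    have hcore0' : b α * b β ∈ P := hvP
    have hpair := seed_span_prod b hpos hPeq hbα hbβ
      (seedW_prod b hL hR hcore0' hαβ')
    rcases hprime _ _ (seed_isSerreIdeal b hpos hbα) (seed_isSerreIdeal b hpos hbβ) hpair with
      h | h
    · exact Or.inl (h (seed_self_mem b (b α)))
    · exact Or.inr (h (seed_self_mem b (b β)))
  · intro hcond I J hI hJ hprod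
    obtain ⟨⟨SI, hIeq⟩, hIL, hIR⟩ := hI
    obtain ⟨⟨SJ, hJeq⟩, hJL, hJR⟩ := hJ
    by_contra hc
    push_neg at hc
    obtain ⟨hI2, hJ2⟩ := hc
    obtain ⟨x, hxI, hxP⟩ := Set.not_subset.mp hI2
    obtain ⟨y, hyJ, hyP⟩ := Set.not_subset.mp hJ2
    have hxP' : ∃ γ, b.repr x γ ≠ 0 ∧ γ ∉ ΓP := by
      by_contra h
      push_neg at h
      exact hxP (by rw [hPeq]; exact (mem_span_iff b ΓP x).mpr h)
    have hyP' : ∃ δ, b.repr y δ ≠ 0 ∧ δ ∉ ΓP := by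
      by_contra h
      push_neg at h
      exact hyP (by rw [hPeq]; exact (mem_span_iff b ΓP y).mpr h)
    obtain ⟨γ, hγx, hγP⟩ := hxP'
    obtain ⟨δ, hδy, hδP⟩ := hyP'
    have hγSI : γ ∈ SI := by
      have := hxI
      rw [hIeq, SetLike.mem_coe, mem_span_iff] at this
      exact this γ hγx
    have hδSJ : δ ∈ SJ := by
      have := hyJ
      rw [hJeq, SetLike.mem_coe, mem_span_iff] at this
      exact this δ hδy
    have hγI : b γ ∈ I := by
      rw [hIeq]
      exact Submodule.subset_span ⟨γ, hγSI, rfl⟩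
    have hδJ : b δ ∈ J := by
      rw [hJeq]
      exact Submodule.subset_span ⟨δ, hδSJ, rfl⟩
    have hbγP : b γ ∉ P := by
      intro h
      rw [hPeq, SetLike.mem_coe, mem_span_iff] at h
      exact hγP (h γ (by rw [b.repr_self]; simp))
    have hbδP : b δ ∉ P := by
      intro h
      rw [hPeq, SetLike.mem_coe, mem_span_iff] at h
      exact hδP (h δ (by rw [b.repr_self]; simp))
    rcases hcond γ δ (fun r => hprod _ (hIR (b γ) hγI r) _ hδJ) with h | h
    · exact hbγP h
    · exact hbδP h
end

section
/- Let R be a ℤ₊-ring. The following are equivalent for a proper Serre ideal Q of R: (a) Q is an intersection of Serre prime ideals; (b) every Serre ideal I with I² ⊆ Q satisfies I ⊆ Q; (c) every Serre ideal I properly containing Q satisfies I² ⊄ Q; (d) for all r ∈ R₊, rRr ⊆ Q implies r ∈ Q. -/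
variable {Γ R : Type*}

namespace SP
section aux
variable [NonUnitalRing R] (b : Module.Basis Γ ℤ R)

lemma repr_mul (x y : R) (γ : Γ) :
    b.repr (x * y) γ =
      (b.repr x).sum fun α cα => (b.repr y).sum fun β cβ => cα * cβ * b.repr (b α * b β) γ := by
  conv_lhs => rw [← b.linearCombination_repr x, ← b.linearCombination_repr y]
  rw [Finsupp.linearCombination_apply, Finsupp.linearCombination_apply, Finsupp.sum_mul]
  simp_rw [Finsupp.mul_sum, smul_mul_assoc, mul_smul_comm]
  rw [map_finsuppSum, Finsupp.sum_apply]
  refine Finsupp.sum_congr fun α hα => ?_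
  rw [map_finsuppSum, Finsupp.sum_apply]
  refine Finsupp.sum_congr fun β hβ => ?_
  rw [map_zsmul, map_zsmul, Finsupp.smul_apply, Finsupp.smul_apply, smul_eq_mul, smul_eq_mul,
    mul_assoc]

lemma basis_mem_ZPos (γ : Γ) : b γ ∈ ZPos b := by
  classical
  intro δ
  rw [b.repr_self, Finsupp.single_apply]
  split <;> omega

lemma zero_mem_ZPos : (0 : R) ∈ ZPos b := by intro δ; simp

lemma serre_basis_mem {I : Set R} (hI : IsSerreIdeal b I) {x : R} (hx : x ∈ I) {γ : Γ}
    (hγ : b.repr x γ ≠ 0) : b γ ∈ I := by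
  obtain ⟨⟨Γ', rfl⟩, -, -⟩ := hI
  have h1 : ↑(b.repr x).support ⊆ Γ' := b.mem_span_image.1 hx
  exact Submodule.subset_span ⟨γ, h1 (Finsupp.mem_support_iff.2 hγ), rfl⟩

lemma serre_mem_of {I : Set R} (hI : IsSerreIdeal b I) {x : R}
    (h : ∀ γ, b.repr x γ ≠ 0 → b γ ∈ I) : x ∈ I := by
  obtain ⟨⟨Γ', rfl⟩, -, -⟩ := hI
  refine b.mem_span_image.2 fun γ hγ => ?_
  rw [Finset.mem_coe, Finsupp.mem_support_iff] at hγ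
  have h2 := b.mem_span_image.1 (h γ hγ)
  rw [b.repr_self, Finsupp.support_single_ne_zero _ one_ne_zero] at h2
  exact h2 (by simp)

lemma serre_sub_mem {I : Set R} (hI : IsSerreIdeal b I) {x y : R} (hx : x ∈ I) (hy : y ∈ I) :
    x - y ∈ I := by
  obtain ⟨⟨Γ', rfl⟩, -, -⟩ := hI
  exact Submodule.sub_mem _ hx hy

lemma prod_mem {Q : Set R} (hQ : IsSerreIdeal b Q) {x y : R}
    (h : ∀ α β, b.repr x α ≠ 0 → b.repr y β ≠ 0 → b α * b β ∈ Q) : x * y ∈ Q := by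
  refine serre_mem_of b hQ fun γ hγ => ?_
  rw [repr_mul] at hγ
  have : ∃ α, b.repr x α ≠ 0 ∧ ∃ β, b.repr y β ≠ 0 ∧ b.repr (b α * b β) γ ≠ 0 := by
    by_contra hc
    push_neg at hc
    refine hγ (Finset.sum_eq_zero fun α hα => Finset.sum_eq_zero fun β hβ => ?_)
    rw [Finsupp.mem_support_iff] at hα hβ
    simp only [hc α hα β hβ, mul_zero]
  obtain ⟨α, hα, β, hβ, hc⟩ := this
  exact serre_basis_mem b hQ (h α β hα hβ) hc

lemma repr_self_ne (γ : Γ) : b.repr (b γ) γ ≠ 0 := by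
  rw [b.repr_self, Finsupp.single_eq_same]; exact one_ne_zero

lemma exists_of_repr_mul_ne {x y : R} {γ : Γ} (h : b.repr (x * y) γ ≠ 0) :
    ∃ α β, b.repr x α ≠ 0 ∧ b.repr y β ≠ 0 ∧ b.repr (b α * b β) γ ≠ 0 := by
  rw [repr_mul] at h
  by_contra hc
  push_neg at hc
  refine h (Finset.sum_eq_zero fun α hα => Finset.sum_eq_zero fun β hβ => ?_)
  rw [Finsupp.mem_support_iff] at hα hβ
  simp only [hc α β hα hβ, mul_zero]

lemma serre_span (Δ : Set Γ)
    (hcl : ∀ δ ∈ Δ, ∀ μ γ, (b.repr (b μ * b δ) γ ≠ 0 ∨ b.repr (b δ * b μ) γ ≠ 0) → γ ∈ Δ) :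
    IsSerreIdeal b ↑(Submodule.span ℤ (⇑b '' Δ)) := by
  refine ⟨⟨Δ, rfl⟩, ?_, ?_⟩ <;> intro x hx s <;>
    · have hx' : ↑(b.repr x).support ⊆ Δ := b.mem_span_image.1 hx
      refine b.mem_span_image.2 fun γ hγ => ?_
      rw [Finset.mem_coe, Finsupp.mem_support_iff] at hγ
      first
      | · obtain ⟨α, δ, hα, hδ, hc⟩ := exists_of_repr_mul_ne b hγ
          exact hcl δ (hx' (Finset.mem_coe.2 (Finsupp.mem_support_iff.2 hδ))) α γ (Or.inl hc)
      | · obtain ⟨δ, α, hδ, hα, hc⟩ := exists_of_repr_mul_ne b hγ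
          exact hcl δ (hx' (Finset.mem_coe.2 (Finsupp.mem_support_iff.2 hδ))) α γ (Or.inr hc)


lemma serre_mem_span {I : Set R} (hI : IsSerreIdeal b I) {Δ : Set Γ} {x : R}
    (hx : x ∈ I) (h : ∀ γ, b γ ∈ I → γ ∈ Δ) : x ∈ ↑(Submodule.span ℤ (⇑b '' Δ)) :=
  b.mem_span_image.2 fun γ hγ => h γ (serre_basis_mem b hI hx
    (Finsupp.mem_support_iff.1 (Finset.mem_coe.1 hγ)))

lemma serre_sup {I J : Set R} (hI : IsSerreIdeal b I) (hJ : IsSerreIdeal b J) :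
    ∃ K : Set R, IsSerreIdeal b K ∧ I ⊆ K ∧ J ⊆ K ∧
      ∀ x ∈ K, ∀ γ : Γ, b.repr x γ ≠ 0 → b γ ∈ I ∨ b γ ∈ J := by
  set Δ : Set Γ := {γ | b γ ∈ I ∨ b γ ∈ J} with hΔ
  have hcl : ∀ δ ∈ Δ, ∀ μ γ, (b.repr (b μ * b δ) γ ≠ 0 ∨ b.repr (b δ * b μ) γ ≠ 0) → γ ∈ Δ := by
    rintro δ (hδ | hδ) μ γ (h | h)
    · exact Or.inl (serre_basis_mem b hI (hI.2.1 _ hδ _) h)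
    · exact Or.inl (serre_basis_mem b hI (hI.2.2 _ hδ _) h)
    · exact Or.inr (serre_basis_mem b hJ (hJ.2.1 _ hδ _) h)
    · exact Or.inr (serre_basis_mem b hJ (hJ.2.2 _ hδ _) h)
  refine ⟨_, serre_span b Δ hcl, ?_, ?_, ?_⟩
  · exact fun x hx => serre_mem_span b hI hx fun γ hγ => Or.inl hγ
  · exact fun x hx => serre_mem_span b hJ hx fun γ hγ => Or.inr hγ
  · exact fun x hx γ hγ => b.mem_span_image.1 hx (Finset.mem_coe.2 (Finsupp.mem_support_iff.2 hγ))

variable (hpos : PosBasis b)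
include hpos

lemma repr_mul_nonneg {X Y : R} (hX : X ∈ ZPos b) (hY : Y ∈ ZPos b) (γ : Γ) :
    0 ≤ b.repr (X * Y) γ := by
  rw [repr_mul]
  refine Finset.sum_nonneg fun α hα => Finset.sum_nonneg fun β hβ => ?_
  exact mul_nonneg (mul_nonneg (hX α) (hY β)) (hpos α β γ)

lemma mul_mem_ZPos {X Y : R} (hX : X ∈ ZPos b) (hY : Y ∈ ZPos b) : X * Y ∈ ZPos b :=
  fun γ => repr_mul_nonneg b hpos hX hY γ

lemma repr_mul_pos {X Y : R} (hX : X ∈ ZPos b) (hY : Y ∈ ZPos b) {δ ε γ : Γ}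
    (hδ : b.repr X δ ≠ 0) (hε : b.repr Y ε ≠ 0) (hγ : b.repr (b δ * b ε) γ ≠ 0) :
    b.repr (X * Y) γ ≠ 0 := by
  have hterm : 0 < b.repr X δ * b.repr Y ε * b.repr (b δ * b ε) γ := by
    have h1 := (hX δ).lt_of_ne (Ne.symm hδ)
    have h2 := (hY ε).lt_of_ne (Ne.symm hε)
    have h3 := (hpos δ ε γ).lt_of_ne (Ne.symm hγ)
    exact mul_pos (mul_pos h1 h2) h3
  refine ne_of_gt (lt_of_lt_of_le hterm ?_)
  conv_rhs => rw [repr_mul]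
  simp only [Finsupp.sum]
  have hεs : ε ∈ (b.repr Y).support := Finsupp.mem_support_iff.2 hε
  have hδs : δ ∈ (b.repr X).support := Finsupp.mem_support_iff.2 hδ
  refine le_trans (Finset.single_le_sum (f := fun β => b.repr X δ * b.repr Y β * b.repr (b δ * b β) γ)
    (fun β _ => mul_nonneg (mul_nonneg (hX δ) (hY β)) (hpos δ β γ)) hεs)
    (Finset.single_le_sum (f := fun α => (b.repr Y).sum fun cβ d => b.repr X α * d * b.repr (b α * b cβ) γ)
      (fun α _ => Finset.sum_nonneg fun β _ => mul_nonneg (mul_nonneg (hX α) (hY β)) (hpos α β γ)) hδs)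


lemma stage {Q : Set R} (hQ : IsSerreIdeal b Q)
    (hsemi : ∀ I : Set R, IsSerreIdeal b I → (∀ x ∈ I, ∀ y ∈ I, x * y ∈ Q) → I ⊆ Q)
    (W : Set R) (hW1 : W ⊆ ZPos b)
    (hWl : ∀ w ∈ W, ∀ μ : Γ, b μ * w ∈ W) (hWr : ∀ w ∈ W, ∀ μ : Γ, w * b μ ∈ W)
    (hWQ : ∀ w₁ ∈ W, ∀ w₂ ∈ W, w₁ * w₂ ∈ Q) : ∀ w ∈ W, w ∈ Q := by
  set Δ : Set Γ := {δ | ∃ w ∈ W, b.repr w δ ≠ 0} with hΔ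
  have hcl : ∀ δ ∈ Δ, ∀ μ γ, (b.repr (b μ * b δ) γ ≠ 0 ∨ b.repr (b δ * b μ) γ ≠ 0) → γ ∈ Δ := by
    rintro δ ⟨w, hw, hwδ⟩ μ γ (h | h)
    · exact ⟨b μ * w, hWl w hw μ,
        repr_mul_pos b hpos (basis_mem_ZPos b μ) (hW1 hw) (repr_self_ne b μ) hwδ h⟩
    · exact ⟨w * b μ, hWr w hw μ,
        repr_mul_pos b hpos (hW1 hw) (basis_mem_ZPos b μ) hwδ (repr_self_ne b μ) h⟩
  have hsub := hsemi _ (serre_span b Δ hcl) ?_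
  · intro w hw
    exact hsub (b.mem_span_image.2 fun γ hγ =>
      ⟨w, hw, Finsupp.mem_support_iff.1 (Finset.mem_coe.1 hγ)⟩)
  · intro x hx y hy
    refine prod_mem b hQ fun α β hα hβ => ?_
    obtain ⟨w, hw, hwα⟩ := b.mem_span_image.1 hx (Finset.mem_coe.2 (Finsupp.mem_support_iff.2 hα))
    obtain ⟨w', hw', hw'β⟩ := b.mem_span_image.1 hy (Finset.mem_coe.2 (Finsupp.mem_support_iff.2 hβ))
    refine serre_mem_of b hQ fun γ hγ => ?_
    exact serre_basis_mem b hQ (hWQ w hw w' hw')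
      (repr_mul_pos b hpos (hW1 hw) (hW1 hw') hwα hw'β hγ)


lemma b_imp_d {Q : Set R} (hQ : IsSerreIdeal b Q)
    (hsemi : ∀ I : Set R, IsSerreIdeal b I → (∀ x ∈ I, ∀ y ∈ I, x * y ∈ Q) → I ⊆ Q) :
    ∀ r ∈ ZPos b, (∀ x : R, r * x * r ∈ Q) → r ∈ Q := by
  intro r hr hrQ
  obtain ⟨-, hQl, hQr⟩ := id hQ
  -- Stage A : elements of the form `r * v` and `u * r * v`
  have hA : ∀ z ∈ {z : R | ∃ v ∈ ZPos b, z = r * v ∨ ∃ u ∈ ZPos b, z = u * r * v}, z ∈ Q := by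
    refine stage b hpos hQ hsemi _ ?_ ?_ ?_ ?_
    · rintro z ⟨v, hv, (rfl | ⟨u, hu, rfl⟩)⟩
      · exact mul_mem_ZPos b hpos hr hv
      · exact mul_mem_ZPos b hpos (mul_mem_ZPos b hpos hu hr) hv
    · rintro z ⟨v, hv, (rfl | ⟨u, hu, rfl⟩)⟩ μ
      · exact ⟨v, hv, Or.inr ⟨b μ, basis_mem_ZPos b μ, by simp only [mul_assoc]⟩⟩
      · exact ⟨v, hv, Or.inr ⟨b μ * u, mul_mem_ZPos b hpos (basis_mem_ZPos b μ) hu,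
          by simp only [mul_assoc]⟩⟩
    · rintro z ⟨v, hv, (rfl | ⟨u, hu, rfl⟩)⟩ μ
      · exact ⟨v * b μ, mul_mem_ZPos b hpos hv (basis_mem_ZPos b μ), Or.inl (by
          simp only [mul_assoc])⟩
      · exact ⟨v * b μ, mul_mem_ZPos b hpos hv (basis_mem_ZPos b μ), Or.inr ⟨u, hu, by
          simp only [mul_assoc]⟩⟩
    · rintro z ⟨v, hv, (rfl | ⟨u, hu, rfl⟩)⟩ z' ⟨v', hv', (rfl | ⟨u', hu', rfl⟩)⟩
      · have e : r * v * (r * v') = r * v * r * v' := by simp only [mul_assoc]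
        rw [e]; exact hQr _ (hrQ v) v'
      · have e : r * v * (u' * r * v') = r * (v * u') * r * v' := by simp only [mul_assoc]
        rw [e]; exact hQr _ (hrQ (v * u')) v'
      · have e : u * r * v * (r * v') = u * (r * v * r * v') := by simp only [mul_assoc]
        rw [e]; exact hQl _ (hQr _ (hrQ v) v') u
      · have e : u * r * v * (u' * r * v') = u * (r * (v * u') * r * v') := by
          simp only [mul_assoc]
        rw [e]; exact hQl _ (hQr _ (hrQ (v * u')) v') u
  have keyA : ∀ v ∈ ZPos b, r * v ∈ Q := fun v hv => hA _ ⟨v, hv, Or.inl rfl⟩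
  -- Stage B : elements of the form `u * r` and `u * r * v`
  have hB : ∀ z ∈ {z : R | ∃ u ∈ ZPos b, z = u * r ∨ ∃ v ∈ ZPos b, z = u * r * v}, z ∈ Q := by
    refine stage b hpos hQ hsemi _ ?_ ?_ ?_ ?_
    · rintro z ⟨u, hu, (rfl | ⟨v, hv, rfl⟩)⟩
      · exact mul_mem_ZPos b hpos hu hr
      · exact mul_mem_ZPos b hpos (mul_mem_ZPos b hpos hu hr) hv
    · rintro z ⟨u, hu, (rfl | ⟨v, hv, rfl⟩)⟩ μ
      · exact ⟨b μ * u, mul_mem_ZPos b hpos (basis_mem_ZPos b μ) hu, Or.inl (by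
          simp only [mul_assoc])⟩
      · exact ⟨b μ * u, mul_mem_ZPos b hpos (basis_mem_ZPos b μ) hu, Or.inr ⟨v, hv, by
          simp only [mul_assoc]⟩⟩
    · rintro z ⟨u, hu, (rfl | ⟨v, hv, rfl⟩)⟩ μ
      · exact ⟨u, hu, Or.inr ⟨b μ, basis_mem_ZPos b μ, rfl⟩⟩
      · exact ⟨u, hu, Or.inr ⟨v * b μ, mul_mem_ZPos b hpos hv (basis_mem_ZPos b μ), by
          simp only [mul_assoc]⟩⟩
    · rintro z ⟨u, hu, (rfl | ⟨v, hv, rfl⟩)⟩ z' ⟨u', hu', (rfl | ⟨v', hv', rfl⟩)⟩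
      · have e : u * r * (u' * r) = u * (r * u' * r) := by simp only [mul_assoc]
        rw [e]; exact hQl _ (hrQ u') u
      · have e : u * r * (u' * r * v') = u * (r * u' * r * v') := by simp only [mul_assoc]
        rw [e]; exact hQl _ (hQr _ (hrQ u') v') u
      · have e : u * r * v * (u' * r) = u * (r * (v * u') * r) := by simp only [mul_assoc]
        rw [e]; exact hQl _ (hrQ (v * u')) u
      · have e : u * r * v * (u' * r * v') = u * (r * (v * u') * r * v') := by
          simp only [mul_assoc]
        rw [e]; exact hQl _ (hQr _ (hrQ (v * u')) v') u
  have keyB : ∀ u ∈ ZPos b, u * r ∈ Q := fun u hu => hB _ ⟨u, hu, Or.inl rfl⟩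
  -- Stage C : `r` together with positive elements of `Q`
  have hC : ∀ z ∈ insert r (ZPos b ∩ Q), z ∈ Q := by
    refine stage b hpos hQ hsemi _ ?_ ?_ ?_ ?_
    · rintro z (rfl | ⟨hz, -⟩)
      · exact hr
      · exact hz
    · rintro z (rfl | ⟨hz1, hz2⟩) μ
      · exact Or.inr ⟨mul_mem_ZPos b hpos (basis_mem_ZPos b μ) hr,
          keyB (b μ) (basis_mem_ZPos b μ)⟩
      · exact Or.inr ⟨mul_mem_ZPos b hpos (basis_mem_ZPos b μ) hz1, hQl _ hz2 _⟩
    · rintro z (rfl | ⟨hz1, hz2⟩) μ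
      · exact Or.inr ⟨mul_mem_ZPos b hpos hr (basis_mem_ZPos b μ),
          keyA (b μ) (basis_mem_ZPos b μ)⟩
      · exact Or.inr ⟨mul_mem_ZPos b hpos hz1 (basis_mem_ZPos b μ), hQr _ hz2 _⟩
    · rintro z (rfl | ⟨-, hz2⟩) z' (rfl | ⟨-, hz'2⟩)
      · exact keyA _ hr
      · exact hQl _ hz'2 _
      · exact hQr _ hz2 _
      · exact hQr _ hz2 _
  exact hC r (Set.mem_insert r _)


omit hpos in
lemma chain_finset {c : Set (Set R)} (hchain : IsChain (· ⊆ ·) c) (hcne : c.Nonempty)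
    (s : Finset Γ) (h : ∀ γ ∈ s, ∃ I ∈ c, b γ ∈ I) : ∃ I ∈ c, ∀ γ ∈ s, b γ ∈ I := by
  classical
  induction s using Finset.induction_on with
  | empty =>
      obtain ⟨I, hI⟩ := hcne
      exact ⟨I, hI, fun γ hγ => absurd hγ (Finset.notMem_empty γ)⟩
  | @insert a s ha ih =>
      obtain ⟨I, hIc, hI⟩ := ih fun γ hγ => h γ (Finset.mem_insert_of_mem hγ)
      obtain ⟨J, hJc, hJ⟩ := h a (Finset.mem_insert_self a s)
      rcases hchain.total hIc hJc with hsub | hsub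
      · exact ⟨J, hJc, fun γ hγ => (Finset.mem_insert.1 hγ).elim (fun e => e ▸ hJ)
          fun hγ => hsub (hI γ hγ)⟩
      · exact ⟨I, hIc, fun γ hγ => (Finset.mem_insert.1 hγ).elim (fun e => e ▸ hsub hJ)
          fun hγ => hI γ hγ⟩

omit hpos in
lemma d_imp_a {Q : Set R} (hQ : IsSerreIdeal b Q)
    (hd : ∀ r ∈ ZPos b, (∀ x : R, r * x * r ∈ Q) → r ∈ Q) :
    ∃ S : Set (Set R), (∀ P ∈ S, IsSerrePrime b P) ∧ Q = ⋂₀ S := by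
  refine ⟨{P | IsSerrePrime b P ∧ Q ⊆ P}, fun P hP => hP.1, ?_⟩
  apply Set.Subset.antisymm
  · exact fun x hx => Set.mem_sInter.2 fun P hP => hP.2 hx
  · intro x hx
    by_contra hxQ
    have hex : ∃ γ₀, b.repr x γ₀ ≠ 0 ∧ b γ₀ ∉ Q := by
      by_contra hc
      push_neg at hc
      exact hxQ (serre_mem_of b hQ fun γ h => hc γ h)
    obtain ⟨γ₀, hγ₀x, hγ₀Q⟩ := hex
    have step : ∀ γ : Γ, b γ ∉ Q → ∃ γ', b γ' ∉ Q ∧ ∃ w, b.repr (b γ * w * b γ) γ' ≠ 0 := by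
      intro γ hγ
      by_contra hc
      push_neg at hc
      refine hγ (hd (b γ) (basis_mem_ZPos b γ) fun w => ?_)
      refine serre_mem_of b hQ fun γ' h => ?_
      by_contra hns
      exact h (hc γ' hns w)
    choose F hF1 hF2 using fun t : {γ : Γ // b γ ∉ Q} => step t.1 t.2
    let f : {γ : Γ // b γ ∉ Q} → {γ : Γ // b γ ∉ Q} := fun t => ⟨F t, hF1 t⟩
    let g : ℕ → {γ : Γ // b γ ∉ Q} := fun n => f^[n] ⟨γ₀, hγ₀Q⟩
    have hgs : ∀ n, ∃ w, b.repr (b (g n).1 * w * b (g n).1) (g (n + 1)).1 ≠ 0 := by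
      intro n
      have h1 : g (n + 1) = f (g n) := Function.iterate_succ_apply' f n _
      rw [h1]
      exact hF2 (g n)
    set Fam : Set (Set R) := {I | IsSerreIdeal b I ∧ Q ⊆ I ∧ ∀ n, b (g n).1 ∉ I} with hFam
    have hQF : Q ∈ Fam := ⟨hQ, le_refl _, fun n => (g n).2⟩
    have hub : ∀ c ⊆ Fam, IsChain (· ⊆ ·) c → c.Nonempty →
        ∃ ub ∈ Fam, ∀ s ∈ c, s ⊆ ub := by
      intro c hcF hchain hcne
      refine ⟨⋃₀ c, ⟨⟨?_, ?_, ?_⟩, ?_, ?_⟩, fun s hs => Set.subset_sUnion_of_mem hs⟩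
      · refine ⟨{γ | b γ ∈ ⋃₀ c}, Set.Subset.antisymm ?_ ?_⟩
        · rintro y ⟨I, hI, hyI⟩
          exact serre_mem_span b (hcF hI).1 hyI fun γ hγ => ⟨I, hI, hγ⟩
        · intro y hy
          obtain ⟨I, hIc, hI⟩ := chain_finset b hchain hcne (b.repr y).support fun γ hγ =>
            b.mem_span_image.1 hy (Finset.mem_coe.2 hγ)
          exact ⟨I, hIc, serre_mem_of b (hcF hIc).1 fun γ h =>
            hI γ (Finsupp.mem_support_iff.2 h)⟩
      · rintro y ⟨I, hIc, hyI⟩ s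
        exact ⟨I, hIc, (hcF hIc).1.2.1 _ hyI s⟩
      · rintro y ⟨I, hIc, hyI⟩ s
        exact ⟨I, hIc, (hcF hIc).1.2.2 _ hyI s⟩
      · obtain ⟨I, hI⟩ := hcne
        exact (hcF hI).2.1.trans (Set.subset_sUnion_of_mem hI)
      · rintro n ⟨I, hIc, hmem⟩
        exact (hcF hIc).2.2 n hmem
    obtain ⟨P, hQP, hPmax⟩ := zorn_subset_nonempty Fam hub Q hQF
    obtain ⟨hPS, hQsubP, hPg⟩ := hPmax.1
    have hprime : IsSerrePrime b P := by
      refine ⟨hPS, ?_, ?_⟩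
      · intro h
        exact hPg 0 (h ▸ Set.mem_univ _)
      · intro I J hI hJ hIJ
        by_contra hc
        push_neg at hc
        obtain ⟨hInP, hJnP⟩ := hc
        have find : ∀ {T : Set R}, IsSerreIdeal b T → ¬ T ⊆ P → ∃ n, b (g n).1 ∈ T := by
          intro T hT hTP
          obtain ⟨K, hK, hPK, hTK, hKcase⟩ := serre_sup b hPS hT
          have hKF : K ∉ Fam := fun hKF => hTP (hTK.trans (hPmax.2 hKF hPK))
          have hKn : ¬ ∀ n, b (g n).1 ∉ K := fun hall => hKF ⟨hK, hQsubP.trans hPK, hall⟩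
          push_neg at hKn
          obtain ⟨n, hn⟩ := hKn
          rcases hKcase _ hn (g n).1 (repr_self_ne b (g n).1) with h | h
          · exact absurd h (hPg n)
          · exact ⟨n, h⟩
        obtain ⟨n, hnI⟩ := find hI hInP
        obtain ⟨m, hmJ⟩ := find hJ hJnP
        have mono : ∀ (T : Set R), IsSerreIdeal b T → ∀ k, b (g k).1 ∈ T →
            ∀ l, k ≤ l → b (g l).1 ∈ T := by
          intro T hT k hk l hl
          induction l, hl using Nat.le_induction with
          | base => exact hk
          | succ l hl ih =>
            obtain ⟨w, hw⟩ := hgs l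
            exact serre_basis_mem b hT (hT.2.2 _ (hT.2.2 _ ih w) (b (g l).1)) hw
        obtain ⟨w, hw⟩ := hgs (max n m)
        have hP' : b (g (max n m)).1 * w * b (g (max n m)).1 ∈ P :=
          hIJ _ (hI.2.2 _ (mono I hI n hnI _ (le_max_left n m)) w) _
            (mono J hJ m hmJ _ (le_max_right n m))
        exact hPg (max n m + 1) (serre_basis_mem b hPS hP' hw)
    have hxP : x ∈ P := Set.mem_sInter.1 hx P ⟨hprime, hQsubP⟩
    have hg0 : (g 0).1 = γ₀ := rfl
    exact hPg 0 (serre_basis_mem b hPS hxP (hg0 ▸ hγ₀x))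

end aux
end SP

/-- characterizations of Serre semiprime ideals of a `ℤ₊`-ring.
For a proper Serre ideal `Q` the following are equivalent:
(a) `Q` is an intersection of Serre prime ideals;
(b) every Serre ideal `I` with `I² ⊆ Q` satisfies `I ⊆ Q`;
(c) every Serre ideal `I` properly containing `Q` satisfies `I² ⊄ Q`;
(d) for every `r ∈ R₊`, `rRr ⊆ Q` implies `r ∈ Q`. -/
theorem serreSemiprime_tfae
    [NonUnitalRing R] (b : Module.Basis Γ ℤ R) (hpos : PosBasis b)
    (Q : Set R) (hQ : IsSerreIdeal b Q) (hproper : Q ≠ Set.univ) :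
    List.TFAE
      [∃ S : Set (Set R), (∀ P ∈ S, IsSerrePrime b P) ∧ Q = ⋂₀ S,
       ∀ I : Set R, IsSerreIdeal b I → (∀ x ∈ I, ∀ y ∈ I, x * y ∈ Q) → I ⊆ Q,
       ∀ I : Set R, IsSerreIdeal b I → Q ⊆ I → I ≠ Q → ¬ (∀ x ∈ I, ∀ y ∈ I, x * y ∈ Q),
       ∀ r : R, r ∈ ZPos b → (∀ x : R, r * x * r ∈ Q) → r ∈ Q] := by
  tfae_have 1 → 2 := by
    rintro ⟨S, hS, rfl⟩ I hI hII y hy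
    refine Set.mem_sInter.2 fun P hP => ?_
    rcases (hS P hP).2.2 I I hI hI
        (fun u hu v hv => Set.mem_sInter.1 (hII u hu v hv) P hP) with h | h
    · exact h hy
    · exact h hy
  tfae_have 2 → 3 := by
    intro h2 I hI hQI hne hsq
    exact hne (Set.Subset.antisymm (h2 I hI hsq) hQI)
  tfae_have 3 → 2 := by
    intro h3 I hI hII
    obtain ⟨K, hK, hQK, hIK, hKcase⟩ := SP.serre_sup b hQ hI
    have hKQ : K = Q := by
      by_contra hne
      refine h3 K hK hQK hne ?_
      intro u hu v hv
      refine SP.prod_mem b hQ fun α β hα hβ => ?_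
      rcases hKcase u hu α hα with h | h
      · exact hQ.2.2 _ h _
      · rcases hKcase v hv β hβ with h' | h'
        · exact hQ.2.1 _ h' _
        · exact hII _ h _ h'
    exact hKQ ▸ hIK
  tfae_have 2 → 4 := SP.b_imp_d b hpos hQ
  tfae_have 4 → 1 := SP.d_imp_a b hQ
  tfae_finish
end

section
/- Let C be an abelian category in which every object has finite length. Then the Serre subcategories of C are in bijection with the subsets of the set C_s of isomorphism classes of simple objects of C: to a subset X ⊆ C_s corresponds the full subcategory S(X) of objects all of whose Jordan–Hölder simple subquotients lie in X, and every Serre subcategory of C is of this form. -/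
open CategoryTheory CategoryTheory.Limits ZeroObject

universe v u

variable {C : Type u} [Category.{v} C] [Abelian C]

/-- A Serre subcategory of an abelian category, given as a set of objects:
it contains a zero object and is closed under subobjects, quotients and extensions. -/
def IsSerreSub (P : Set C) : Prop :=
  (∃ Z : C, IsZero Z ∧ Z ∈ P) ∧
  (∀ (A B : C) (f : A ⟶ B), Mono f → B ∈ P → A ∈ P) ∧
  (∀ (A B : C) (f : A ⟶ B), Epi f → A ∈ P → B ∈ P) ∧
  (∀ S : ShortComplex C, S.ShortExact → S.X₁ ∈ P → S.X₃ ∈ P → S.X₂ ∈ P)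

/-- `S` is a subquotient of `A`. -/
def IsSubquotient (S A : C) : Prop :=
  ∃ (B : C) (i : B ⟶ A) (p : B ⟶ S), Mono i ∧ Epi p

/-- `S(X)`: the full subcategory of objects all of whose simple subquotients
(equivalently, all of whose Jordan–Hölder factors) lie in `X`. -/
def SofX (X : Set C) : Set C :=
  {A | ∀ S : C, Simple S → IsSubquotient S A → S ∈ X}

/- ### Auxiliary lemmas -/

lemma serre_zero_mem {P : Set C} (hP : IsSerreSub P) {A : C} (hA : IsZero A) : A ∈ P := by
  obtain ⟨⟨Z, hZ, hZP⟩, hsub, -, -⟩ := hP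
  have : Mono (hA.to_ Z) := ⟨fun g h _ => hA.eq_of_tgt g h⟩
  exact hsub A Z (hA.to_ Z) this hZP

lemma serre_iso_mem {P : Set C} (hP : IsSerreSub P) {A B : C} (e : A ≅ B) (hA : A ∈ P) :
    B ∈ P :=
  hP.2.1 B A e.inv inferInstance hA

lemma isSubquotient_self (A : C) : IsSubquotient A A :=
  ⟨A, 𝟙 A, 𝟙 A, inferInstance, inferInstance⟩

lemma isSubquotient_of_mono {S A B : C} (h : IsSubquotient S A) (f : A ⟶ B) (hf : Mono f) :
    IsSubquotient S B := by
  obtain ⟨D, i, p, hi, hp⟩ := h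
  haveI := hi; haveI := hf
  exact ⟨D, i ≫ f, p, inferInstance, hp⟩

lemma isSubquotient_of_epi {S A B : C} (h : IsSubquotient S B) (f : A ⟶ B) (hf : Epi f) :
    IsSubquotient S A := by
  obtain ⟨D, i, p, hi, hp⟩ := h
  haveI := hi; haveI := hf; haveI := hp
  haveI : Epi (pullback.fst i f) := Abelian.epi_pullback_of_epi_g i f
  exact ⟨pullback i f, pullback.snd i f, pullback.fst i f ≫ p, inferInstance, inferInstance⟩

lemma isZero_of_isSubquotient_isZero {S A : C} (h : IsSubquotient S A) (hA : IsZero A) :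
    IsZero S := by
  obtain ⟨D, i, p, hi, hp⟩ := h
  haveI := hi; haveI := hp
  exact IsZero.of_epi p (IsZero.of_mono i hA)

/-- A simple subquotient of the middle term of a short exact sequence is a subquotient of
one of the outer terms. -/
lemma isSubquotient_or_of_shortExact {S : ShortComplex C} (hS : S.ShortExact) {T : C}
    (hT : Simple T) (h : IsSubquotient T S.X₂) :
    IsSubquotient T S.X₁ ∨ IsSubquotient T S.X₃ := by
  obtain ⟨B, i, p, hi, hp⟩ := h
  haveI := hi; haveI := hp; haveI := hT; haveI := hS.mono_f; haveI := hS.epi_g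
  by_cases hq : kernel.ι (i ≫ S.g) ≫ p = 0
  · right
    refine ⟨Abelian.coimage (i ≫ S.g), Abelian.factorThruCoimage (i ≫ S.g),
      cokernel.desc _ p hq, inferInstance, ?_⟩
    have hfac : cokernel.π (kernel.ι (i ≫ S.g)) ≫ cokernel.desc _ p hq = p :=
      cokernel.π_desc _ _ _
    haveI : Epi (cokernel.π (kernel.ι (i ≫ S.g)) ≫ cokernel.desc _ p hq) := by
      rw [hfac]; exact hp
    exact epi_of_epi (cokernel.π (kernel.ι (i ≫ S.g))) _
  · left
    haveI : Epi (kernel.ι (i ≫ S.g) ≫ p) := epi_of_nonzero_to_simple hq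
    have hk : (kernel.ι (i ≫ S.g) ≫ i) ≫ S.g = 0 := by
      rw [Category.assoc]; exact kernel.condition _
    refine ⟨kernel (i ≫ S.g), hS.exact.lift (kernel.ι (i ≫ S.g) ≫ i) hk,
      kernel.ι (i ≫ S.g) ≫ p, ?_, inferInstance⟩
    have hfac := hS.exact.lift_f (kernel.ι (i ≫ S.g) ≫ i) hk
    haveI : Mono (hS.exact.lift (kernel.ι (i ≫ S.g) ≫ i) hk ≫ S.f) := by
      rw [hfac]; infer_instance
    exact mono_of_mono _ S.f

/-- Key lemma: if every simple subquotient of `A` lies in the Serre subcategory `P`,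
then `A ∈ P`. -/
lemma mem_of_simple_subquotients_mem {P : Set C} (hP : IsSerreSub P)
    [∀ X : C, IsNoetherianObject X] [∀ X : C, IsArtinianObject X]
    {A : C} (hA : ∀ S : C, Simple S → IsSubquotient S A → S ∈ P) : A ∈ P := by
  have hbot : (⊥ : Subobject A) ∈ {B : Subobject A | (B : C) ∈ P} :=
    serre_zero_mem hP (Limits.IsZero.of_iso (isZero_zero C) Subobject.botCoeIsoZero)
  obtain ⟨B, hB, hmax⟩ := WellFounded.has_min ((wellFounded_gt (α := Subobject A)))
    {B : Subobject A | (B : C) ∈ P} ⟨⊥, hbot⟩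
  -- we claim B = ⊤
  by_cases htop : B = ⊤
  · subst htop
    exact serre_iso_mem hP (asIso (⊤ : Subobject A).arrow) hB
  · exfalso
    have hQ : ¬ IsZero (cokernel B.arrow) := by
      intro h
      apply htop
      have hπ0 : cokernel.π B.arrow = 0 := h.eq_zero_of_tgt _
      haveI : Epi B.arrow := Abelian.epi_of_cokernel_π_eq_zero _ hπ0
      haveI : IsIso B.arrow := isIso_of_mono_of_epi _
      exact (Subobject.isIso_arrow_iff_eq_top B).mp inferInstance
    obtain ⟨S', hS'⟩ := exists_simple_subobject hQ
    haveI := hS'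
    haveI : Epi (pullback.fst S'.arrow (cokernel.π B.arrow)) := Abelian.epi_pullback_of_epi_g _ _
    have hSP : (S' : C) ∈ P := hA _ hS'
      ⟨pullback S'.arrow (cokernel.π B.arrow), pullback.snd _ _, pullback.fst _ _, inferInstance, inferInstance⟩
    -- the enlarged subobject
    have hcond : (0 : (B : C) ⟶ (S' : C)) ≫ S'.arrow = B.arrow ≫ (cokernel.π B.arrow) := by
      simp [cokernel.condition]
    set f₀ : (B : C) ⟶ pullback S'.arrow (cokernel.π B.arrow) := pullback.lift 0 B.arrow hcond with hf₀
    have hf₀fst : f₀ ≫ pullback.fst S'.arrow (cokernel.π B.arrow) = 0 := pullback.lift_fst _ _ _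
    have hf₀snd : f₀ ≫ pullback.snd S'.arrow (cokernel.π B.arrow) = B.arrow := pullback.lift_snd _ _ _
    haveI : Mono (f₀ ≫ pullback.snd S'.arrow (cokernel.π B.arrow)) := by rw [hf₀snd]; infer_instance
    haveI hmono : Mono f₀ := mono_of_mono f₀ (pullback.snd S'.arrow (cokernel.π B.arrow))
    -- the short exact sequence B → pullback → S'
    set Sc : ShortComplex C := ShortComplex.mk f₀ (pullback.fst S'.arrow (cokernel.π B.arrow)) hf₀fst with hSc
    have hexact : Sc.Exact := by
      apply ShortComplex.exact_of_f_is_kernel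
      refine KernelFork.IsLimit.ofι' f₀ hf₀fst ?_
      intro W t ht
      have hcomp : (t ≫ pullback.snd S'.arrow (cokernel.π B.arrow)) ≫ (cokernel.π B.arrow) = 0 := by
        rw [Category.assoc, ← pullback.condition, ← Category.assoc, ht, zero_comp]
      refine ⟨Abelian.monoLift B.arrow (t ≫ pullback.snd S'.arrow (cokernel.π B.arrow)) hcomp, ?_⟩
      apply pullback.hom_ext
      · rw [Category.assoc, hf₀fst, comp_zero, ht]
      · rw [Category.assoc, hf₀snd, Abelian.monoLift_comp]
    have hse : Sc.ShortExact := { exact := hexact }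
    have hpb : pullback S'.arrow (cokernel.π B.arrow) ∈ P := hP.2.2.2 Sc hse hB hSP
    -- contradiction with maximality
    have hmem : Subobject.mk (pullback.snd S'.arrow (cokernel.π B.arrow)) ∈ {B : Subobject A | (B : C) ∈ P} :=
      serre_iso_mem hP (Subobject.underlyingIso (pullback.snd S'.arrow (cokernel.π B.arrow))).symm hpb
    have hle : B ≤ Subobject.mk (pullback.snd S'.arrow (cokernel.π B.arrow)) :=
      Subobject.le_mk_of_comm f₀ hf₀snd
    have hne : B ≠ Subobject.mk (pullback.snd S'.arrow (cokernel.π B.arrow)) := by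
      intro he
      have hge : Subobject.mk (pullback.snd S'.arrow (cokernel.π B.arrow)) ≤ B := le_of_eq he.symm
      set u := Subobject.ofMkLE (pullback.snd S'.arrow (cokernel.π B.arrow)) B hge with hu
      have hu' : u ≫ B.arrow = pullback.snd S'.arrow (cokernel.π B.arrow) := Subobject.ofMkLE_arrow hge
      have hz : pullback.fst S'.arrow (cokernel.π B.arrow) ≫ S'.arrow = 0 := by
        rw [pullback.condition, ← hu', Category.assoc, cokernel.condition, comp_zero]
      have hz' : pullback.fst S'.arrow (cokernel.π B.arrow) = 0 := zero_of_comp_mono S'.arrow hz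
      haveI : Epi (0 : pullback S'.arrow (cokernel.π B.arrow) ⟶ (S' : C)) := by rw [← hz']; infer_instance
      exact Simple.not_isZero (S' : C) (IsZero.of_epi_zero (pullback S'.arrow (cokernel.π B.arrow)) (S' : C))
    exact hmax _ hmem (lt_of_le_of_ne hle hne)

/-- in an abelian category in which every object has finite length,
the Serre subcategories are in bijection with the (isomorphism-closed) sets of
simple objects: every Serre subcategory `P` equals `S(X)` where `X` is its set of
simple objects, and conversely for any isomorphism-closed set `X` of simple
objects, `S(X)` is a Serre subcategory whose set of simple objects is `X`. -/
theorem serreSub_correspondence_simples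
    [∀ X : C, IsNoetherianObject X] [∀ X : C, IsArtinianObject X] :
    (∀ P : Set C, IsSerreSub P → P = SofX {S : C | Simple S ∧ S ∈ P}) ∧
    (∀ X : Set C, (∀ S ∈ X, Simple S) →
      (∀ S S' : C, S ∈ X → Nonempty (S ≅ S') → S' ∈ X) →
      IsSerreSub (SofX X) ∧ {S : C | Simple S ∧ S ∈ SofX X} = X) := by
  constructor
  · intro P hP
    ext A
    constructor
    · intro hA S hS hsub
      obtain ⟨B, i, p, hi, hp⟩ := hsub
      exact ⟨hS, hP.2.2.1 B S p hp (hP.2.1 B A i hi hA)⟩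
    · intro hA
      exact mem_of_simple_subquotients_mem hP fun S hS hsub => (hA S hS hsub).2
  · intro X hX hiso
    constructor
    · refine ⟨⟨0, isZero_zero C, ?_⟩, ?_, ?_, ?_⟩
      · intro S hS hsub
        exact absurd (isZero_of_isSubquotient_isZero hsub (isZero_zero C))
          (Simple.not_isZero S)
      · intro A B f hf hB S hS hsub
        exact hB S hS (isSubquotient_of_mono hsub f hf)
      · intro A B f hf hA S hS hsub
        exact hA S hS (isSubquotient_of_epi hsub f hf)
      · intro S hse h₁ h₃ T hT hsub
        rcases isSubquotient_or_of_shortExact hse hT hsub with h | h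
        · exact h₁ T hT h
        · exact h₃ T hT h
    · ext S
      constructor
      · intro hS
        exact hS.2 S hS.1 (isSubquotient_self S)
      · intro hS
        haveI := hX S hS
        refine ⟨hX S hS, ?_⟩
        intro T hT hsub
        haveI := hT
        obtain ⟨B, i, p, hi, hp⟩ := hsub
        haveI := hi; haveI := hp
        by_cases hiz : i = 0
        · exfalso
          haveI : Mono (0 : B ⟶ S) := by rw [← hiz]; infer_instance
          have hBz : IsZero B := IsZero.of_mono_zero B S
          exact Simple.not_isZero T (IsZero.of_epi p hBz)
        · haveI : IsIso i := isIso_of_mono_of_nonzero hiz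
          haveI : Simple B := Simple.of_iso (asIso i)
          have hpz : p ≠ 0 := by
            intro hp0
            haveI : Epi (0 : B ⟶ T) := by rw [← hp0]; infer_instance
            exact Simple.not_isZero T (IsZero.of_epi_zero B T)
          haveI : Mono p := mono_of_nonzero_from_simple hpz
          haveI : IsIso p := isIso_of_mono_of_epi p
          exact hiso S T hS ⟨(asIso i).symm ≪≫ asIso p⟩
end

section
/- Let R be a ℤ₊-ring and let M ⊆ R₊ \ {0} be a multiplicatively closed subset with I a Serre ideal satisfying I ∩ M = ∅. Then any maximal element of the set of Serre ideals of R containing I and disjoint from M is a Serre prime ideal of R; moreover such a maximal element exists by Zorn's lemma. -/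
variable {Γ R : Type*}

open Pointwise

lemma serre_sup [NonUnitalRing R] (b : Module.Basis Γ ℤ R) {A P : Set R}
    (hA : IsSerreIdeal b A) (hP : IsSerreIdeal b P) :
    IsSerreIdeal b (A + P) := by
  obtain ⟨⟨ΓA, hAeq⟩, hAl, hAr⟩ := hA
  obtain ⟨⟨ΓP, hPeq⟩, hPl, hPr⟩ := hP
  have key : A + P = ↑(Submodule.span ℤ (⇑b '' (ΓA ∪ ΓP))) := by
    rw [Set.image_union, Submodule.span_union, Submodule.coe_sup, hAeq, hPeq]
  refine ⟨⟨_, key⟩, ?_, ?_⟩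
  · rintro r ⟨a, ha, p, hp, rfl⟩ s
    exact ⟨s * a, hAl a ha s, s * p, hPl p hp s, (mul_add s a p).symm⟩
  · rintro r ⟨a, ha, p, hp, rfl⟩ s
    exact ⟨a * s, hAr a ha s, p * s, hPr p hp s, (add_mul a p s).symm⟩

lemma serre_zero [NonUnitalRing R] (b : Module.Basis Γ ℤ R) {A : Set R}
    (hA : IsSerreIdeal b A) : (0 : R) ∈ A := by
  obtain ⟨⟨ΓA, rfl⟩, -, -⟩ := hA
  exact Submodule.zero_mem _

lemma serre_add [NonUnitalRing R] (b : Module.Basis Γ ℤ R) {A : Set R}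
    (hA : IsSerreIdeal b A) {x y : R} (hx : x ∈ A) (hy : y ∈ A) : x + y ∈ A := by
  obtain ⟨⟨ΓA, rfl⟩, -, -⟩ := hA
  exact Submodule.add_mem _ hx hy


/-- let `M ⊆ R₊ \ {0}` be a nonempty multiplicatively closed set and
`I` a Serre ideal with `I ∩ M = ∅`. Then every maximal element of the set of Serre
ideals containing `I` and disjoint from `M` is Serre prime, and such a maximal
element exists. -/
theorem maximal_serreIdeal_disjoint_from_mult_set_is_prime
    [NonUnitalRing R] (b : Module.Basis Γ ℤ R) (hpos : PosBasis b)
    (M : Set R) (hMne : M.Nonempty) (hM : M ⊆ ZPos b \ {0})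
    (hMmul : ∀ m ∈ M, ∀ m' ∈ M, m * m' ∈ M)
    (I : Set R) (hI : IsSerreIdeal b I) (hdisj : I ∩ M = ∅) :
    (∀ P : Set R, IsSerreIdeal b P → I ⊆ P → P ∩ M = ∅ →
      (∀ K : Set R, IsSerreIdeal b K → I ⊆ K → K ∩ M = ∅ → P ⊆ K → K = P) →
      IsSerrePrime b P) ∧
    ∃ P : Set R, IsSerreIdeal b P ∧ I ⊆ P ∧ P ∩ M = ∅ ∧
      ∀ K : Set R, IsSerreIdeal b K → I ⊆ K → K ∩ M = ∅ → P ⊆ K → K = P := by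
  constructor
  · intro P hP hIP hPM hmax
    refine ⟨hP, ?_, ?_⟩
    · obtain ⟨m, hm⟩ := hMne
      intro h
      have : m ∈ P ∩ M := ⟨h ▸ Set.mem_univ m, hm⟩
      rw [hPM] at this
      exact this
    · intro A B hA hB hAB
      by_contra hcon
      push_neg at hcon
      obtain ⟨hAP, hBP⟩ := hcon
      obtain ⟨a, haA, haP⟩ := Set.not_subset.mp hAP
      obtain ⟨c, hcB, hcP⟩ := Set.not_subset.mp hBP
      have hA' := serre_sup b hA hP
      have hB' := serre_sup b hB hP
      have hPsubA' : P ⊆ A + P := fun p hp => ⟨0, serre_zero b hA, p, hp, zero_add p⟩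
      have hPsubB' : P ⊆ B + P := fun p hp => ⟨0, serre_zero b hB, p, hp, zero_add p⟩
      have hmA' : ((A + P) ∩ M).Nonempty := by
        rw [Set.nonempty_iff_ne_empty]
        intro h
        have := hmax (A + P) hA' (hIP.trans hPsubA') h hPsubA'
        exact haP (this ▸ ⟨a, haA, 0, serre_zero b hP, add_zero a⟩)
      have hmB' : ((B + P) ∩ M).Nonempty := by
        rw [Set.nonempty_iff_ne_empty]
        intro h
        have := hmax (B + P) hB' (hIP.trans hPsubB') h hPsubB'
        exact hcP (this ▸ ⟨c, hcB, 0, serre_zero b hP, add_zero c⟩)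
      obtain ⟨m, ⟨a1, ha1, p1, hp1, rfl⟩, hmM⟩ := hmA'
      obtain ⟨m', ⟨b1, hb1, q1, hq1, rfl⟩, hm'M⟩ := hmB'
      have hexp : (a1 + p1) * (b1 + q1) = a1 * b1 + a1 * q1 + (p1 * b1 + p1 * q1) := by
        rw [add_mul, mul_add, mul_add, add_assoc]
      have hmem : (a1 + p1) * (b1 + q1) ∈ P := by
        rw [hexp]
        exact serre_add b hP
          (serre_add b hP (hAB a1 ha1 b1 hb1) (hP.2.1 q1 hq1 a1))
          (serre_add b hP (hP.2.2 p1 hp1 b1) (hP.2.2 p1 hp1 q1))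
      have : (a1 + p1) * (b1 + q1) ∈ P ∩ M := ⟨hmem, hMmul _ hmM _ hm'M⟩
      rw [hPM] at this
      exact this
  · have hZorn : ∀ c ⊆ {K : Set R | IsSerreIdeal b K ∧ I ⊆ K ∧ K ∩ M = ∅},
        IsChain (· ⊆ ·) c → c.Nonempty →
        ∃ ub ∈ {K : Set R | IsSerreIdeal b K ∧ I ⊆ K ∧ K ∩ M = ∅}, ∀ s ∈ c, s ⊆ ub := by
      intro c hcS hchain hcne
      haveI : Nonempty c := hcne.to_subtype
      choose f hf using fun K : c => (hcS K.2).1.1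
      have hdir : Directed (· ≤ ·) (fun K : c => Submodule.span ℤ (⇑b '' f K)) := by
        intro K K'
        rcases hchain.total K.2 K'.2 with h | h
        · exact ⟨K', SetLike.coe_subset_coe.mp (by rw [← hf K, ← hf K']; exact h), le_refl _⟩
        · exact ⟨K, le_refl _, SetLike.coe_subset_coe.mp (by rw [← hf K, ← hf K']; exact h)⟩
      have hserre : IsSerreIdeal b (⋃₀ c) := by
        refine ⟨⟨⋃ K : c, f K, ?_⟩, ?_, ?_⟩
        · rw [Set.image_iUnion, Submodule.span_iUnion,
            Submodule.coe_iSup_of_directed _ hdir, Set.sUnion_eq_iUnion]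
          exact Set.iUnion_congr fun K => hf K
        · rintro r hr s
          obtain ⟨K, hKc, hrK⟩ := hr
          exact Set.mem_sUnion.mpr ⟨K, hKc, (hcS hKc).1.2.1 r hrK s⟩
        · rintro r hr s
          obtain ⟨K, hKc, hrK⟩ := hr
          exact Set.mem_sUnion.mpr ⟨K, hKc, (hcS hKc).1.2.2 r hrK s⟩
      refine ⟨⋃₀ c, ⟨hserre, ?_, ?_⟩, fun s hs => Set.subset_sUnion_of_mem hs⟩
      · obtain ⟨K, hK⟩ := hcne
        exact fun x hx => ⟨K, hK, (hcS hK).2.1 hx⟩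
      · rw [Set.eq_empty_iff_forall_notMem]
        rintro x ⟨⟨K, hKc, hxK⟩, hxM⟩
        have : x ∈ K ∩ M := ⟨hxK, hxM⟩
        rw [(hcS hKc).2.2] at this
        exact this
    obtain ⟨P, hIP, hmax⟩ := zorn_subset_nonempty _ hZorn I ⟨hI, subset_rfl, hdisj⟩
    exact ⟨P, hmax.prop.1, hIP, hmax.prop.2.2,
      fun K hK hIK hKM hPK => subset_antisymm (hmax.2 ⟨hK, hIK, hKM⟩ hPK) hPK⟩
end

section
/- Let R be a ℤ₊-ring and Q a proper Serre ideal with the property that for all r ∈ R₊, rRr ⊆ Q implies r ∈ Q. Then Q is an intersection of Serre prime ideals of R. (Levitzki–Nagata-type theorem for Serre ideals of ℤ₊-rings.) -/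
variable {Γ R : Type*}

section Aux

variable [NonUnitalRing R] (b : Module.Basis Γ ℤ R)

/-- Membership in the span of the image of a set of basis vectors. -/
lemma mem_span_basis_iff {A : Set Γ} {r : R} :
    r ∈ Submodule.span ℤ (⇑b '' A) ↔ ∀ γ : Γ, b.repr r γ ≠ 0 → γ ∈ A := by
  rw [Module.Basis.mem_span_image]
  constructor
  · intro hs γ hγ
    exact hs (by simpa using Finsupp.mem_support_iff.mpr hγ)
  · intro hs γ hγ
    exact hs γ (Finsupp.mem_support_iff.mp (by simpa using hγ))

/-- Membership in a Serre ideal is detected on the support. -/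
lemma serre_mem_iff {I : Set R} (hI : IsSerreIdeal b I) {r : R} :
    r ∈ I ↔ ∀ γ : Γ, b.repr r γ ≠ 0 → b γ ∈ I := by
  obtain ⟨A, hA⟩ := hI.1
  subst hA
  constructor
  · intro hr γ hγ
    have hγA : γ ∈ A := (mem_span_basis_iff b).mp hr γ hγ
    exact Submodule.subset_span (Set.mem_image_of_mem _ hγA)
  · intro hr
    refine (mem_span_basis_iff b).mpr fun γ hγ => ?_
    have hbγ := hr γ hγ
    have := (mem_span_basis_iff b).mp hbγ γ (by simp)
    exact this

lemma serre_add_mem {I : Set R} (hI : IsSerreIdeal b I) {r s : R}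
    (hr : r ∈ I) (hs : s ∈ I) : r + s ∈ I := by
  obtain ⟨A, hA⟩ := hI.1
  subst hA
  exact Submodule.add_mem _ hr hs

/-- Key existence lemma: a Serre prime containing `Q` and avoiding `g`. -/
lemma exists_serre_prime (Q : Set R) (hQ : IsSerreIdeal b Q)
    (h : ∀ r : R, r ∈ ZPos b → (∀ x : R, r * x * r ∈ Q) → r ∈ Q)
    {g : R} (hg : g ∉ Q) :
    ∃ P : Set R, IsSerrePrime b P ∧ Q ⊆ P ∧ g ∉ P := by
  classical
  -- find a basis element in the support of g outside Q
  have hg' : ¬ ∀ γ : Γ, b.repr g γ ≠ 0 → b γ ∈ Q := fun hc => hg ((serre_mem_iff b hQ).mpr hc)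
  push_neg at hg'
  obtain ⟨γ0, hγ0supp, hγ0Q⟩ := hg'
  -- one step of the sequence
  have step : ∀ γ : Γ, b γ ∉ Q → ∃ γ' : Γ, ∃ x : R,
      b γ' ∉ Q ∧ b.repr (b γ * x * b γ) γ' ≠ 0 := by
    intro γ hγ
    have hx : ¬ ∀ x : R, b γ * x * b γ ∈ Q := fun hc => hγ (h (b γ) (basis_mem_zpos b γ) hc)
    push_neg at hx
    obtain ⟨x, hx⟩ := hx
    have : ¬ ∀ δ : Γ, b.repr (b γ * x * b γ) δ ≠ 0 → b δ ∈ Q :=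
      fun hc => hx ((serre_mem_iff b hQ).mpr hc)
    push_neg at this
    obtain ⟨δ, hδ1, hδ2⟩ := this
    exact ⟨δ, x, hδ2, hδ1⟩
  -- the sequence
  let f : {γ : Γ // b γ ∉ Q} → {γ : Γ // b γ ∉ Q} :=
    fun p => ⟨(step p.1 p.2).choose, (step p.1 p.2).choose_spec.choose_spec.1⟩
  let seq : ℕ → {γ : Γ // b γ ∉ Q} := fun n => f^[n] ⟨γ0, hγ0Q⟩
  have hseq0 : (seq 0).1 = γ0 := rfl
  have hseq_succ : ∀ n, seq (n + 1) = f (seq n) := fun n =>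
    Function.iterate_succ_apply' f n _
  have hstep : ∀ n, ∃ x : R,
      b.repr (b (seq n).1 * x * b (seq n).1) (seq (n + 1)).1 ≠ 0 := by
    intro n
    rw [hseq_succ n]
    exact ⟨(step (seq n).1 (seq n).2).choose_spec.choose,
      (step (seq n).1 (seq n).2).choose_spec.choose_spec.2⟩
  -- any Serre ideal containing a term contains all later terms
  have hmono : ∀ I : Set R, IsSerreIdeal b I → ∀ n,
      b (seq n).1 ∈ I → b (seq (n + 1)).1 ∈ I := by
    intro I hI n hn
    obtain ⟨x, hx⟩ := hstep n
    have h1 : b (seq n).1 * x ∈ I := hI.2.2 _ hn x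
    have h2 : b (seq n).1 * x * b (seq n).1 ∈ I := hI.2.2 _ h1 _
    exact (serre_mem_iff b hI).mp h2 _ hx
  have hchain : ∀ I : Set R, IsSerreIdeal b I → ∀ m n, m ≤ n →
      b (seq m).1 ∈ I → b (seq n).1 ∈ I := by
    intro I hI m n hmn hm
    induction n, hmn using Nat.le_induction with
    | base => exact hm
    | succ n hmn ih => exact hmono I hI n ih
  -- the poset for Zorn
  set 𝒞 : Set (Set R) :=
    {I | IsSerreIdeal b I ∧ Q ⊆ I ∧ ∀ n, b (seq n).1 ∉ I} with h𝒞
  have hQ𝒞 : Q ∈ 𝒞 := ⟨hQ, subset_rfl, fun n => (seq n).2⟩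
  have hzorn : ∀ c ⊆ 𝒞, IsChain (· ⊆ ·) c → c.Nonempty →
      ∃ ub ∈ 𝒞, ∀ s ∈ c, s ⊆ ub := by
    intro c hc hcchain hcne
    refine ⟨⋃₀ c, ⟨⟨⟨{γ | b γ ∈ ⋃₀ c}, ?_⟩, ?_, ?_⟩, ?_, ?_⟩,
      fun s hs => Set.subset_sUnion_of_mem hs⟩
    · ext r
      constructor
      · rintro ⟨I, hIc, hrI⟩
        refine (mem_span_basis_iff b).mpr fun γ hγ => ?_
        exact ⟨I, hIc, (serre_mem_iff b (hc hIc).1).mp hrI γ hγ⟩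
      · intro hr
        have hsupp : ∀ γ : Γ, b.repr r γ ≠ 0 → b γ ∈ ⋃₀ c :=
          (mem_span_basis_iff b).mp hr
        have key : ∀ s : Finset Γ, (∀ γ ∈ s, ∃ I ∈ c, b γ ∈ I) →
            ∃ I ∈ c, ∀ γ ∈ s, b γ ∈ I := by
          intro s
          induction s using Finset.induction_on with
          | empty =>
            intro _
            obtain ⟨I, hI⟩ := hcne
            exact ⟨I, hI, by simp⟩
          | @insert γ s hγs ih =>
            intro hs
            obtain ⟨I1, hI1c, hI1⟩ := hs γ (Finset.mem_insert_self _ _)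
            obtain ⟨I2, hI2c, hI2⟩ := ih fun δ hδ => hs δ (Finset.mem_insert_of_mem hδ)
            rcases hcchain.total hI1c hI2c with h12 | h21
            · exact ⟨I2, hI2c, fun δ hδ => by
                rcases Finset.mem_insert.mp hδ with rfl | hδ
                · exact h12 hI1
                · exact hI2 δ hδ⟩
            · exact ⟨I1, hI1c, fun δ hδ => by
                rcases Finset.mem_insert.mp hδ with rfl | hδ
                · exact hI1
                · exact h21 (hI2 δ hδ)⟩
        obtain ⟨I, hIc, hI⟩ := key (b.repr r).support
          (fun γ hγ => hsupp γ (Finsupp.mem_support_iff.mp hγ))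
        exact ⟨I, hIc, (serre_mem_iff b (hc hIc).1).mpr
          (fun γ hγ => hI γ (Finsupp.mem_support_iff.mpr hγ))⟩
    · rintro r ⟨I, hIc, hrI⟩ s
      exact ⟨I, hIc, (hc hIc).1.2.1 r hrI s⟩
    · rintro r ⟨I, hIc, hrI⟩ s
      exact ⟨I, hIc, (hc hIc).1.2.2 r hrI s⟩
    · obtain ⟨I, hI⟩ := hcne
      exact fun r hr => ⟨I, hI, (hc hI).2.1 hr⟩
    · rintro n ⟨I, hIc, hmem⟩
      exact (hc hIc).2.2 n hmem
  obtain ⟨P, hQP, hPmax⟩ := zorn_subset_nonempty 𝒞 hzorn Q hQ𝒞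
  have hP𝒞 : P ∈ 𝒞 := hPmax.prop
  have hPserre : IsSerreIdeal b P := hP𝒞.1
  have hPavoid : ∀ n, b (seq n).1 ∉ P := hP𝒞.2.2
  -- the key swelling lemma
  have key : ∀ I : Set R, IsSerreIdeal b I → ¬ I ⊆ P →
      ∃ n, ∀ k, n ≤ k → ∃ p ∈ P, ∃ i ∈ I, b (seq k).1 = p + i := by
    intro I hI hInot
    set A : Set Γ := {γ | b γ ∈ P}
    set B : Set Γ := {γ | b γ ∈ I}
    set K : Set R := ↑(Submodule.span ℤ (⇑b '' (A ∪ B))) with hKdef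
    have hPsub : ∀ (J : Set R), IsSerreIdeal b J → ∀ {C : Set Γ},
        {γ | b γ ∈ J} ⊆ C → J ⊆ ↑(Submodule.span ℤ (⇑b '' C)) := by
      intro J hJ C hC r hr
      exact (mem_span_basis_iff b).mpr fun γ hγ =>
        hC ((serre_mem_iff b hJ).mp hr γ hγ)
    have hPK : P ⊆ K := hPsub P hPserre Set.subset_union_left
    have hIK : I ⊆ K := hPsub I hI Set.subset_union_right
    have hspanA : (↑(Submodule.span ℤ (⇑b '' A)) : Set R) ⊆ P := by
      intro r hr
      exact (serre_mem_iff b hPserre).mpr fun γ hγ =>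
        (mem_span_basis_iff b).mp hr γ hγ
    have hspanB : (↑(Submodule.span ℤ (⇑b '' B)) : Set R) ⊆ I := by
      intro r hr
      exact (serre_mem_iff b hI).mpr fun γ hγ =>
        (mem_span_basis_iff b).mp hr γ hγ
    have hdecomp : ∀ r ∈ K, ∃ p ∈ P, ∃ i ∈ I, r = p + i := by
      intro r hr
      have : r ∈ Submodule.span ℤ (⇑b '' A) ⊔ Submodule.span ℤ (⇑b '' B) := by
        rw [← Submodule.span_union, ← Set.image_union]
        exact hr
      obtain ⟨p, hp, i, hi, hpi⟩ := Submodule.mem_sup.mp this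
      exact ⟨p, hspanA hp, i, hspanB hi, hpi.symm⟩
    have hKserre : IsSerreIdeal b K := by
      refine ⟨⟨A ∪ B, rfl⟩, ?_, ?_⟩
      · intro r hr s
        obtain ⟨p, hp, i, hi, rfl⟩ := hdecomp r hr
        rw [mul_add]
        exact Submodule.add_mem _ (hPK (hPserre.2.1 p hp s)) (hIK (hI.2.1 i hi s))
      · intro r hr s
        obtain ⟨p, hp, i, hi, rfl⟩ := hdecomp r hr
        rw [add_mul]
        exact Submodule.add_mem _ (hPK (hPserre.2.2 p hp s)) (hIK (hI.2.2 i hi s))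
    have hKQ : Q ⊆ K := hQP.trans hPK
    have hKnot : K ∉ 𝒞 := by
      intro hK𝒞
      obtain ⟨i, hiI, hiP⟩ := Set.not_subset.mp hInot
      exact hiP (hPmax.2 hK𝒞 hPK (hIK hiI))
    have : ¬ ∀ n, b (seq n).1 ∉ K := fun hc => hKnot ⟨hKserre, hKQ, hc⟩
    push_neg at this
    obtain ⟨n, hn⟩ := this
    exact ⟨n, fun k hk => hdecomp _ (hchain K hKserre n k hk hn)⟩
  -- P is prime
  have hPprime : IsSerrePrime b P := by
    refine ⟨hPserre, ?_, ?_⟩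
    · intro hPu
      exact hPavoid 0 (hPu ▸ Set.mem_univ _)
    · intro I J hI hJ hprod
      by_contra hcon
      push_neg at hcon
      obtain ⟨m, hm⟩ := key I hI hcon.1
      obtain ⟨n, hn⟩ := key J hJ hcon.2
      set k := max m n
      obtain ⟨p, hp, i, hi, hpi⟩ := hm k (le_max_left m n)
      obtain ⟨q, hq, j, hj, hqj⟩ := hn k (le_max_right m n)
      obtain ⟨x, hx⟩ := hstep k
      have hmemP : b (seq k).1 * x * b (seq k).1 ∈ P := by
        nth_rewrite 2 [hqj]
        rw [hpi]
        have hexp : (p + i) * x * (q + j) =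
            ((p + i) * x) * q + ((p * x) * j + i * (x * j)) := by
          noncomm_ring
        rw [hexp]
        have h1 : ((p + i) * x) * q ∈ P := hPserre.2.1 q hq _
        have h2 : (p * x) * j ∈ P := hPserre.2.2 _ (hPserre.2.2 p hp x) j
        have h3 : i * (x * j) ∈ P := hprod i hi (x * j) (hJ.2.1 j hj x)
        exact serre_add_mem b hPserre h1 (serre_add_mem b hPserre h2 h3)
      exact hPavoid (k + 1) ((serre_mem_iff b hPserre).mp hmemP _ hx)
  refine ⟨P, hPprime, hQP, ?_⟩
  intro hgP
  exact hPavoid 0 (hseq0 ▸ (serre_mem_iff b hPserre).mp hgP γ0 hγ0supp)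

end Aux

/-- Levitzki–Nagata for Serre ideals of `ℤ₊`-rings: if a proper
Serre ideal `Q` satisfies `rRr ⊆ Q → r ∈ Q` for all `r ∈ R₊`, then `Q` is an
intersection of Serre prime ideals. -/
theorem serreSemiprime_of_rRr_condition
    [NonUnitalRing R] (b : Module.Basis Γ ℤ R) (hpos : PosBasis b)
    (Q : Set R) (hQ : IsSerreIdeal b Q) (hproper : Q ≠ Set.univ)
    (h : ∀ r : R, r ∈ ZPos b → (∀ x : R, r * x * r ∈ Q) → r ∈ Q) :
    ∃ S : Set (Set R), (∀ P ∈ S, IsSerrePrime b P) ∧ Q = ⋂₀ S := by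
  refine ⟨{P | IsSerrePrime b P ∧ Q ⊆ P}, fun P hP => hP.1, ?_⟩
  apply Set.Subset.antisymm
  · intro r hr P hP
    exact hP.2 hr
  · intro r hr
    by_contra hrQ
    obtain ⟨P, hPprime, hQP, hrP⟩ := exists_serre_prime b Q hQ h hrQ
    exact hrP (hr P ⟨hPprime, hQP⟩)
end

section
/- Let R be a ℤ₊-ring satisfying the ascending chain condition on Serre ideals, let I be a proper Serre ideal, and let P be a Serre prime ideal containing I. Then there exists a Serre prime ideal P' minimal among Serre prime ideals containing I such that I ⊆ P' ⊆ P. Moreover, there are only finitely many Serre prime ideals minimal over I. -/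
variable {Γ R : Type*}

section Aux

variable [NonUnitalRing R] (b : Module.Basis Γ ℤ R)

lemma isSerreIdeal_univ : IsSerreIdeal b (Set.univ : Set R) := by
  refine ⟨⟨Set.univ, ?_⟩, by simp, by simp⟩
  rw [Set.image_univ, b.span_eq, Submodule.top_coe]

lemma isSerreIdeal_sInter (c : Set (Set R)) (hc : ∀ J ∈ c, IsSerreIdeal b J) :
    IsSerreIdeal b (⋂₀ c) := by
  refine ⟨?_, ?_, ?_⟩
  · choose f hf using fun (J : c) => (hc J.1 J.2).1
    refine ⟨⋂ J : c, f J, ?_⟩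
    ext x
    rw [Set.mem_sInter, SetLike.mem_coe, Module.Basis.mem_span_image, Set.subset_iInter_iff]
    constructor
    · intro h J
      have hx := h J.1 J.2
      rw [hf J, SetLike.mem_coe, Module.Basis.mem_span_image] at hx
      exact hx
    · intro h J hJ
      rw [show J = ↑(Submodule.span ℤ (⇑b '' f ⟨J, hJ⟩)) from hf ⟨J, hJ⟩]
      exact SetLike.mem_coe.mpr ((b.mem_span_image).mpr (h ⟨J, hJ⟩))
  · intro r hr s
    rw [Set.mem_sInter] at hr ⊢
    exact fun J hJ => (hc J hJ).2.1 r (hr J hJ) s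
  · intro r hr s
    rw [Set.mem_sInter] at hr ⊢
    exact fun J hJ => (hc J hJ).2.2 r (hr J hJ) s

lemma mem_span_image_union {Γ1 Γ2 : Set Γ} {x : R} :
    x ∈ Submodule.span ℤ (⇑b '' (Γ1 ∪ Γ2)) ↔
      ∃ u ∈ Submodule.span ℤ (⇑b '' Γ1), ∃ v ∈ Submodule.span ℤ (⇑b '' Γ2), u + v = x := by
  rw [Set.image_union, Submodule.span_union, Submodule.mem_sup]

lemma isSerreIdeal_span_union {Γ1 Γ2 : Set Γ}
    (h1 : IsSerreIdeal b ↑(Submodule.span ℤ (⇑b '' Γ1)))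
    (h2 : IsSerreIdeal b ↑(Submodule.span ℤ (⇑b '' Γ2))) :
    IsSerreIdeal b ↑(Submodule.span ℤ (⇑b '' (Γ1 ∪ Γ2))) := by
  refine ⟨⟨_, rfl⟩, ?_, ?_⟩
  · intro r hr s
    rw [SetLike.mem_coe, mem_span_image_union b] at hr ⊢
    obtain ⟨u, hu, v, hv, rfl⟩ := hr
    exact ⟨s * u, h1.2.1 u hu s, s * v, h2.2.1 v hv s, (mul_add s u v).symm⟩
  · intro r hr s
    rw [SetLike.mem_coe, mem_span_image_union b] at hr ⊢
    obtain ⟨u, hu, v, hv, rfl⟩ := hr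
    exact ⟨u * s, h1.2.2 u hu s, v * s, h2.2.2 v hv s, (add_mul u v s).symm⟩

/-- From the ACC (as a statement on chains), every nonempty family of Serre
ideals has a maximal element. -/
lemma exists_maximal_serreIdeal
    (hacc : ∀ c : ℕ → Set R, (∀ n, IsSerreIdeal b (c n)) → (∀ n, c n ⊆ c (n + 1)) →
      ∃ N, ∀ n, N ≤ n → c n = c N)
    (F : Set (Set R)) (hF : ∀ J ∈ F, IsSerreIdeal b J) (hne : F.Nonempty) :
    ∃ M ∈ F, ∀ J ∈ F, M ⊆ J → J = M := by
  by_contra h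
  push_neg at h
  obtain ⟨J0, hJ0⟩ := hne
  choose g hgF hgsub hgne using h
  let step : {J // J ∈ F} → {J // J ∈ F} := fun M => ⟨g M.1 M.2, hgF M.1 M.2⟩
  let c : ℕ → {J // J ∈ F} := fun n => step^[n] ⟨J0, hJ0⟩
  have hsucc : ∀ n, c (n + 1) = step (c n) := fun n =>
    Function.iterate_succ_apply' step n _
  have hmono : ∀ n, ((c n : Set R)) ⊆ ((c (n + 1) : Set R)) := by
    intro n; rw [hsucc n]; exact hgsub (c n).1 (c n).2
  obtain ⟨N, hN⟩ := hacc (fun n => (c n).1) (fun n => hF _ (c n).2) hmono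
  have hEq : ((c (N + 1) : Set R)) = (c N : Set R) := hN (N + 1) (Nat.le_succ N)
  rw [hsucc N] at hEq
  exact hgne (c N).1 (c N).2 hEq

/-- `J` has a finite set of Serre primes over it such that every Serre prime
over `J` contains one of them. -/
def HasPrimeCover [NonUnitalRing R] (b : Module.Basis Γ ℤ R) (J : Set R) : Prop :=
  ∃ s : Set (Set R), s.Finite ∧ (∀ p ∈ s, IsSerrePrime b p ∧ J ⊆ p) ∧
    ∀ Q : Set R, IsSerrePrime b Q → J ⊆ Q → ∃ p ∈ s, p ⊆ Q

lemma hasPrimeCover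
    (hacc : ∀ c : ℕ → Set R, (∀ n, IsSerreIdeal b (c n)) → (∀ n, c n ⊆ c (n + 1)) →
      ∃ N, ∀ n, N ≤ n → c n = c N) :
    ∀ J : Set R, IsSerreIdeal b J → J ≠ Set.univ → HasPrimeCover b J := by
  by_contra hbad
  push_neg at hbad
  obtain ⟨J0, hJ0s, hJ0p, hJ0⟩ := hbad
  set F : Set (Set R) := {J | IsSerreIdeal b J ∧ J ≠ Set.univ ∧ ¬ HasPrimeCover b J} with hFdef
  obtain ⟨M, hMF, hMmax⟩ :=
    exists_maximal_serreIdeal b hacc F (fun J hJ => hJ.1) ⟨J0, hJ0s, hJ0p, hJ0⟩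
  obtain ⟨hMs, hMproper, hMnc⟩ := hMF
  apply hMnc
  by_cases hprime : IsSerrePrime b M
  · exact ⟨{M}, Set.finite_singleton M,
      fun p hp => by rw [Set.mem_singleton_iff] at hp; subst hp; exact ⟨hprime, subset_rfl⟩,
      fun Q hQ hMQ => ⟨M, Set.mem_singleton M, hMQ⟩⟩
  -- M is not prime: find Serre ideals A, B with A*B ⊆ M but A ⊄ M, B ⊄ M.
  have hnp : ¬ ∀ A B : Set R, IsSerreIdeal b A → IsSerreIdeal b B →
      (∀ x ∈ A, ∀ y ∈ B, x * y ∈ M) → A ⊆ M ∨ B ⊆ M :=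
    fun h => hprime ⟨hMs, hMproper, h⟩
  push_neg at hnp
  obtain ⟨A, B, hA, hB, hAB, hAM, hBM⟩ := hnp
  obtain ⟨ΓM, hΓM⟩ := hMs.1
  obtain ⟨ΓA, hΓA⟩ := hA.1
  obtain ⟨ΓB, hΓB⟩ := hB.1
  set A' : Set R := ↑(Submodule.span ℤ (⇑b '' (ΓM ∪ ΓA))) with hA'def
  set B' : Set R := ↑(Submodule.span ℤ (⇑b '' (ΓM ∪ ΓB))) with hB'def
  have hA's : IsSerreIdeal b A' := isSerreIdeal_span_union b (hΓM ▸ hMs) (hΓA ▸ hA)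
  have hB's : IsSerreIdeal b B' := isSerreIdeal_span_union b (hΓM ▸ hMs) (hΓB ▸ hB)
  have hsubM : ∀ Γ2 : Set Γ, M ⊆ ↑(Submodule.span ℤ (⇑b '' (ΓM ∪ Γ2))) := by
    intro Γ2
    rw [hΓM]
    exact Submodule.span_mono (Set.image_mono Set.subset_union_left)
  have hMA' : M ⊆ A' := hsubM ΓA
  have hMB' : M ⊆ B' := hsubM ΓB
  have hAA' : A ⊆ A' := by
    rw [hΓA]
    exact Submodule.span_mono (Set.image_mono Set.subset_union_right)
  have hBB' : B ⊆ B' := by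
    rw [hΓB]
    exact Submodule.span_mono (Set.image_mono Set.subset_union_right)
  have hA'ne : A' ≠ M := by
    obtain ⟨a, haA, haM⟩ := Set.not_subset.mp hAM
    exact fun h => haM (h ▸ hAA' haA)
  have hB'ne : B' ≠ M := by
    obtain ⟨x, hxB, hxM⟩ := Set.not_subset.mp hBM
    exact fun h => hxM (h ▸ hBB' hxB)
  -- products of A' and B' land in M
  have hprod : ∀ x ∈ A', ∀ y ∈ B', x * y ∈ M := by
    intro x hx y hy
    rw [hA'def, SetLike.mem_coe, mem_span_image_union b] at hx
    rw [hB'def, SetLike.mem_coe, mem_span_image_union b] at hy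
    obtain ⟨u, hu, a, ha, rfl⟩ := hx
    obtain ⟨v, hv, w, hw, rfl⟩ := hy
    have huM : u ∈ M := by rw [hΓM]; exact hu
    have haA : a ∈ A := by rw [hΓA]; exact ha
    have hwB : w ∈ B := by rw [hΓB]; exact hw
    have hvM : v ∈ M := by rw [hΓM]; exact hv
    have h1 : u * (v + w) ∈ M := hMs.2.2 u huM (v + w)
    have h2 : a * v ∈ M := hMs.2.1 v hvM a
    have h3 : a * w ∈ M := hAB a haA w hwB
    have heq : (u + a) * (v + w) = u * (v + w) + (a * v + a * w) := by
      rw [add_mul, mul_add a]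
    rw [heq, hΓM] at *
    exact Submodule.add_mem _ h1 (Submodule.add_mem _ h2 h3)
  -- a strictly larger proper Serre ideal has a prime cover, by maximality of M
  have hcover : ∀ J : Set R, IsSerreIdeal b J → M ⊆ J → J ≠ M → J ≠ Set.univ →
      HasPrimeCover b J := by
    intro J hJ hMJ hJM hJu
    by_contra hnc
    exact hJM (hMmax J ⟨hJ, hJu, hnc⟩ hMJ)
  by_cases hA'u : A' = Set.univ
  · by_cases hB'u : B' = Set.univ
    · -- all products lie in M: no prime contains M at all
      refine ⟨∅, Set.finite_empty, fun p hp => absurd hp (Set.notMem_empty p), ?_⟩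
      intro Q hQ hMQ
      exfalso
      have := hQ.2.2 Set.univ Set.univ (isSerreIdeal_univ b) (isSerreIdeal_univ b)
        (fun x _ y _ => hMQ (hprod x (hA'u ▸ Set.mem_univ x) y (hB'u ▸ Set.mem_univ y)))
      rcases this with h | h
      · exact hQ.2.1 (Set.eq_univ_of_univ_subset h)
      · exact hQ.2.1 (Set.eq_univ_of_univ_subset h)
    · obtain ⟨s, hsf, hsm, hsc⟩ := hcover B' hB's hMB' hB'ne hB'u
      refine ⟨s, hsf, fun p hp => ⟨(hsm p hp).1, hMB'.trans (hsm p hp).2⟩, ?_⟩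
      intro Q hQ hMQ
      have := hQ.2.2 A' B' hA's hB's (fun x hx y hy => hMQ (hprod x hx y hy))
      rcases this with h | h
      · exact absurd (Set.eq_univ_of_univ_subset (hA'u ▸ h)) hQ.2.1
      · exact hsc Q hQ h
  · by_cases hB'u : B' = Set.univ
    · obtain ⟨s, hsf, hsm, hsc⟩ := hcover A' hA's hMA' hA'ne hA'u
      refine ⟨s, hsf, fun p hp => ⟨(hsm p hp).1, hMA'.trans (hsm p hp).2⟩, ?_⟩
      intro Q hQ hMQ
      have := hQ.2.2 A' B' hA's hB's (fun x hx y hy => hMQ (hprod x hx y hy))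
      rcases this with h | h
      · exact hsc Q hQ h
      · exact absurd (Set.eq_univ_of_univ_subset (hB'u ▸ h)) hQ.2.1
    · obtain ⟨sa, hsaf, hsam, hsac⟩ := hcover A' hA's hMA' hA'ne hA'u
      obtain ⟨sb, hsbf, hsbm, hsbc⟩ := hcover B' hB's hMB' hB'ne hB'u
      refine ⟨sa ∪ sb, hsaf.union hsbf, ?_, ?_⟩
      · rintro p (hp | hp)
        · exact ⟨(hsam p hp).1, hMA'.trans (hsam p hp).2⟩
        · exact ⟨(hsbm p hp).1, hMB'.trans (hsbm p hp).2⟩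
      · intro Q hQ hMQ
        have := hQ.2.2 A' B' hA's hB's (fun x hx y hy => hMQ (hprod x hx y hy))
        rcases this with h | h
        · obtain ⟨p, hp, hpQ⟩ := hsac Q hQ h
          exact ⟨p, Set.mem_union_left _ hp, hpQ⟩
        · obtain ⟨p, hp, hpQ⟩ := hsbc Q hQ h
          exact ⟨p, Set.mem_union_right _ hp, hpQ⟩

/-- The intersection of a nonempty chain of Serre primes is a Serre prime. -/
lemma isSerrePrime_sInter (c : Set (Set R)) (hch : IsChain (· ⊆ ·) c)
    (hc : ∀ Q ∈ c, IsSerrePrime b Q) (hne : c.Nonempty) :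
    IsSerrePrime b (⋂₀ c) := by
  obtain ⟨Q0, hQ0⟩ := hne
  refine ⟨isSerreIdeal_sInter b c (fun Q hQ => (hc Q hQ).1), ?_, ?_⟩
  · intro h
    exact (hc Q0 hQ0).2.1
      (Set.eq_univ_of_univ_subset (h ▸ Set.sInter_subset_of_mem hQ0))
  · intro A B hA hB hAB
    by_cases hAc : A ⊆ ⋂₀ c
    · exact Or.inl hAc
    right
    obtain ⟨a, haA, haI⟩ := Set.not_subset.mp hAc
    rw [Set.mem_sInter] at haI
    push_neg at haI
    obtain ⟨P0, hP0c, haP0⟩ := haI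
    intro x hx
    rw [Set.mem_sInter]
    intro Q hQc
    have hprodQ : ∀ u ∈ A, ∀ v ∈ B, u * v ∈ Q :=
      fun u hu v hv => Set.sInter_subset_of_mem hQc (hAB u hu v hv)
    rcases eq_or_ne Q P0 with rfl | hne'
    · rcases (hc Q hQc).2.2 A B hA hB hprodQ with h | h
      · exact absurd (h haA) haP0
      · exact h hx
    · rcases hch hQc hP0c hne' with hsub | hsup
      · rcases (hc Q hQc).2.2 A B hA hB hprodQ with h | h
        · exact absurd (hsub (h haA)) haP0
        · exact h hx
      · have hprodP0 : ∀ u ∈ A, ∀ v ∈ B, u * v ∈ P0 :=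
          fun u hu v hv => Set.sInter_subset_of_mem hP0c (hAB u hu v hv)
        rcases (hc P0 hP0c).2.2 A B hA hB hprodP0 with h | h
        · exact absurd (h haA) haP0
        · exact hsup (h hx)

end Aux

/-- in a `ℤ₊`-ring with the ACC on Serre ideals, for a proper Serre
ideal `I` and a Serre prime `P ⊇ I` there is a minimal Serre prime `P'` over `I`
with `I ⊆ P' ⊆ P`; moreover there are only finitely many Serre primes minimal
over `I`. -/
theorem exists_minimal_serrePrime_and_finiteness
    [NonUnitalRing R] (b : Module.Basis Γ ℤ R) (hpos : PosBasis b)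
    (hacc : ∀ c : ℕ → Set R, (∀ n, IsSerreIdeal b (c n)) → (∀ n, c n ⊆ c (n + 1)) →
      ∃ N, ∀ n, N ≤ n → c n = c N)
    (I : Set R) (hI : IsSerreIdeal b I) (hproper : I ≠ Set.univ)
    (P : Set R) (hP : IsSerrePrime b P) (hIP : I ⊆ P) :
    (∃ P' : Set R, IsSerrePrime b P' ∧ I ⊆ P' ∧ P' ⊆ P ∧
      ∀ Q : Set R, IsSerrePrime b Q → I ⊆ Q → Q ⊆ P' → Q = P') ∧
    Set.Finite {P' : Set R | IsSerrePrime b P' ∧ I ⊆ P' ∧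
      ∀ Q : Set R, IsSerrePrime b Q → I ⊆ Q → Q ⊆ P' → Q = P'} := by
  constructor
  · -- Zorn's lemma on Serre primes between I and P, ordered by reverse inclusion
    set S : Set (Set R) := {Q | IsSerrePrime b Q ∧ I ⊆ Q ∧ Q ⊆ P} with hSdef
    have hPS : P ∈ S := ⟨hP, hIP, subset_rfl⟩
    have H : ∀ c ⊆ S, IsChain (· ⊆ ·) c → c.Nonempty → ∃ lb ∈ S, ∀ s ∈ c, lb ⊆ s := by
      intro c hcS hch hne
      obtain ⟨Q0, hQ0⟩ := hne
      refine ⟨⋂₀ c, ⟨isSerrePrime_sInter b c hch (fun Q hQ => (hcS hQ).1) ⟨Q0, hQ0⟩,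
        Set.subset_sInter (fun Q hQ => (hcS hQ).2.1),
        (Set.sInter_subset_of_mem hQ0).trans (hcS hQ0).2.2⟩,
        fun s hs => Set.sInter_subset_of_mem hs⟩
    obtain ⟨m, hmP, hmin⟩ := zorn_superset_nonempty S H P hPS
    refine ⟨m, hmin.1.1, hmin.1.2.1, hmP, ?_⟩
    intro Q hQ hIQ hQm
    exact subset_antisymm hQm (hmin.2 ⟨hQ, hIQ, hQm.trans hmP⟩ hQm)
  · -- finiteness via prime covers
    obtain ⟨s, hsf, hsm, hsc⟩ := hasPrimeCover b hacc I hI hproper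
    apply hsf.subset
    rintro P' ⟨hP's, hIP', hmin⟩
    obtain ⟨p, hps, hpP'⟩ := hsc P' hP's hIP'
    have : p = P' := hmin p (hsm p hps).1 (hsm p hps).2 hpP'
    exact this ▸ hps
end
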